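/- arXiv:2108.13633 — 7 statements merged into one kernel-verified Lean document; each statement's English description precedes it below -/
import Mathlib

section
/- For distinct indices i, j, k in {1,...,n}, the matrices Y_{i,j} (with (i,j) entry 2, (i,i) entry -1, other diagonal entries 1, other entries 0) satisfy (Y_{j,i}Y_{i,j}Y_{k,j}Y_{j,k}Y_{i,k}Y_{k,i})² = I. -/
/-- The matrix `Y_{i,j}` (for `i ≠ j`): `(i,j)` entry `2`, `(i,i)` entry `-1`,
other diagonal entries `1`, other entries `0`. -/
def Ymat (n : ℕ) (i j : Fin n) : Matrix (Fin n) (Fin n) ℤ :=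
  fun k l => if k = i ∧ l = j then 2 else if k = l then (if k = i then -1 else 1) else 0

private def Emat (n : ℕ) (a b : Fin n) : Matrix (Fin n) (Fin n) ℤ :=
  Matrix.single a b 1

private lemma Emat_mul_same {n : ℕ} (a b c : Fin n) :
    Emat n a b * Emat n b c = Emat n a c := by
  simp [Emat, Matrix.single_mul_single_same]

private lemma Emat_mul_ne {n : ℕ} {b c : Fin n} (h : b ≠ c) (a d : Fin n) :
    Emat n a b * Emat n c d = 0 := by
  unfold Emat
  exact Matrix.single_mul_single_of_ne (c := (1 : ℤ)) a b _ h 1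

private lemma Ymat_eq {n : ℕ} {a b : Fin n} (hab : a ≠ b) :
    Ymat n a b = 1 + (-2 : ℤ) • Emat n a a + (2 : ℤ) • Emat n a b := by
  ext x y
  simp only [Ymat, Emat, Matrix.add_apply, Matrix.smul_apply, Matrix.one_apply,
    Matrix.single, Matrix.of_apply, smul_eq_mul]
  by_cases hx : x = a <;> by_cases hy : y = b <;> by_cases hxy : x = y <;>
    simp_all <;> omega

/-- For distinct `i, j, k`, `(Y_{j,i}Y_{i,j}Y_{k,j}Y_{j,k}Y_{i,k}Y_{k,i})² = 1`. -/
theorem Ymat_rel_four {n : ℕ} (hn : 3 ≤ n) (i j k : Fin n)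
    (hij : i ≠ j) (hik : i ≠ k) (hjk : j ≠ k) :
    (Ymat n j i * Ymat n i j * Ymat n k j * Ymat n j k * Ymat n i k * Ymat n k i) ^ 2 = 1 := by
  have hji := hij.symm
  have hki := hik.symm
  have hkj := hjk.symm
  have key : Ymat n j i * Ymat n i j * Ymat n k j * Ymat n j k * Ymat n i k * Ymat n k i =
      1 + (-4 : ℤ) • Emat n j j + (6 : ℤ) • Emat n j i + (-2 : ℤ) • Emat n i j
        + (-4 : ℤ) • Emat n k k + (-2 : ℤ) • Emat n k j + (-2 : ℤ) • Emat n j k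
        + (-2 : ℤ) • Emat n i k + (6 : ℤ) • Emat n k i + (4 : ℤ) • Emat n i i := by
    rw [Ymat_eq hji, Ymat_eq hij, Ymat_eq hkj, Ymat_eq hjk, Ymat_eq hik, Ymat_eq hki]
    simp only [add_mul, mul_add, one_mul, mul_one, smul_mul_assoc, mul_smul_comm, smul_smul,
      Emat_mul_same, Emat_mul_ne hij, Emat_mul_ne hji, Emat_mul_ne hik, Emat_mul_ne hki,
      Emat_mul_ne hjk, Emat_mul_ne hkj, smul_zero, add_zero, zero_add]
    module
  rw [key, sq]
  simp only [add_mul, mul_add, one_mul, mul_one, smul_mul_assoc, mul_smul_comm, smul_smul,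
    Emat_mul_same, Emat_mul_ne hij, Emat_mul_ne hji, Emat_mul_ne hik, Emat_mul_ne hki,
    Emat_mul_ne hjk, Emat_mul_ne hkj, smul_zero, add_zero, zero_add]
  module
end

section
/- Let G be a group with a presentation in generators Y_{i,j} (1 ≤ i ≤ g-1, 1 ≤ j ≤ g, i ≠ j) subject to relators including Y_{i,j}² = 1, (Y_{i,j}Y_{k,j})² = 1, (Y_{i,j}Y_{k,l})² = 1, (Y_{i,j}Y_{i,k}Y_{j,k})² = 1, and (Y_{i,j}Y_{i,k}Y_{i,l})² = 1 for distinct indices. Define Y_{g,j} = (Y_{1,j}Y_{1,g})(Y_{2,j}Y_{2,g})⋯(Y_{j-1,j}Y_{j-1,g})(Y_{j+1,j}Y_{j+1,g})⋯(Y_{g-1,j}Y_{g-1,g})Y_{j,g}. Then for all 1 ≤ i ≤ g-1 with i ≠ j, Y_{i,j} commutes with Y_{g,j}: Y_{i,j}Y_{g,j} = Y_{g,j}Y_{i,j}. -/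
private lemma inv_eq_self_of_sq {G : Type*} [Group G] {x : G} (h : x * x = 1) : x⁻¹ = x :=
  inv_eq_of_mul_eq_one_right h

private lemma comm_of_sq {G : Type*} [Group G] {x y : G} (hx : x * x = 1) (hy : y * y = 1)
    (hxy : (x * y) ^ 2 = 1) : Commute x y := by
  have h : (x * y) * (x * y) = 1 := by rwa [pow_two] at hxy
  have : x * y = (x * y)⁻¹ := (inv_eq_self_of_sq h).symm
  rw [mul_inv_rev, inv_eq_self_of_sq hx, inv_eq_self_of_sq hy] at this
  exact this

/-- In a group generated by elements `Y i j` (`1 ≤ i ≤ g-1`, `1 ≤ j ≤ g`, `i ≠ j`)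
satisfying the relations `Y_{i,j}² = 1`, `(Y_{i,j}Y_{k,j})² = 1`, `(Y_{i,j}Y_{k,l})² = 1`,
`(Y_{i,j}Y_{i,k}Y_{j,k})² = 1` and `(Y_{i,j}Y_{i,k}Y_{i,l})² = 1` for distinct indices,
the element
`Y_{g,j} = (Y_{1,j}Y_{1,g})⋯(Y_{j-1,j}Y_{j-1,g})(Y_{j+1,j}Y_{j+1,g})⋯(Y_{g-1,j}Y_{g-1,g})Y_{j,g}`
commutes with `Y_{i,j}` for every `1 ≤ i ≤ g-1` with `i ≠ j`. -/
theorem Ygj_comm {G : Type*} [Group G] (g : ℕ) (hg : 3 ≤ g) (Y : ℕ → ℕ → G)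
    (h1 : ∀ i j, 1 ≤ i → i ≤ g - 1 → 1 ≤ j → j ≤ g → i ≠ j → (Y i j) ^ 2 = 1)
    (h2a : ∀ i j k, 1 ≤ i → i ≤ g - 1 → 1 ≤ j → j ≤ g → 1 ≤ k → k ≤ g - 1 →
      i ≠ j → i ≠ k → j ≠ k → (Y i j * Y k j) ^ 2 = 1)
    (h2b : ∀ i j k l, 1 ≤ i → i ≤ g - 1 → 1 ≤ j → j ≤ g → 1 ≤ k → k ≤ g - 1 → 1 ≤ l → l ≤ g →
      i ≠ j → i ≠ k → i ≠ l → j ≠ k → j ≠ l → k ≠ l → (Y i j * Y k l) ^ 2 = 1)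
    (h3a : ∀ i j k, 1 ≤ i → i ≤ g - 1 → 1 ≤ j → j ≤ g - 1 → 1 ≤ k → k ≤ g →
      i ≠ j → i ≠ k → j ≠ k → (Y i j * Y i k * Y j k) ^ 2 = 1)
    (h3b : ∀ i j k l, 1 ≤ i → i ≤ g - 1 → 1 ≤ j → j ≤ g → 1 ≤ k → k ≤ g → 1 ≤ l → l ≤ g →
      i ≠ j → i ≠ k → i ≠ l → j ≠ k → j ≠ l → k ≠ l → (Y i j * Y i k * Y i l) ^ 2 = 1)
    (j : ℕ) (hj1 : 1 ≤ j) (hj2 : j ≤ g - 1)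
    (Ygj : G)
    (hYgj : Ygj = ((((List.range' 1 (g - 1)).filter (fun k => k ≠ j)).map
        (fun k => Y k j * Y k g)).prod) * Y j g)
    (i : ℕ) (hi1 : 1 ≤ i) (hi2 : i ≤ g - 1) (hij : i ≠ j) :
    Y i j * Ygj = Ygj * Y i j := by
  -- notation
  set a := Y i j with ha
  set b := Y i g with hb
  set c := Y j g with hc
  set F : ℕ → G := fun k => Y k j * Y k g with hF
  set L : List ℕ := (List.range' 1 (g - 1)).filter (fun k => k ≠ j) with hL
  -- basic squares
  have sq : ∀ {x : G}, x ^ 2 = 1 → x * x = 1 := fun h => by rwa [pow_two] at h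
  have hgg : 1 ≤ g := by omega
  have haa : a * a = 1 := sq (h1 i j hi1 hi2 hj1 (by omega) hij)
  have hbb : b * b = 1 := sq (h1 i g hi1 hi2 hgg le_rfl (by omega))
  have hcc : c * c = 1 := sq (h1 j g hj1 hj2 hgg le_rfl (by omega))
  -- b and c commute
  have hbc : b * c = c * b :=
    comm_of_sq hbb hcc (h2a i g j hi1 hi2 hgg le_rfl hj1 hj2 (by omega) hij (by omega))
  -- a*b*c = c*b*a
  have habc : a * b * c = c * b * a := by
    have h := h3a i j g hi1 hi2 hj1 hj2 hgg le_rfl hij (by omega) (by omega)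
    have h' : (a * b * c) * (a * b * c) = 1 := by rwa [pow_two] at h
    have := (inv_eq_self_of_sq h').symm
    rw [mul_inv_rev, mul_inv_rev, inv_eq_self_of_sq haa, inv_eq_self_of_sq hbb,
      inv_eq_self_of_sq hcc] at this
    rw [this]; group
  -- the conjugate Z
  set Z : G := b * a * b with hZ
  -- key1 : a * F i = F i * Z
  have key1 : a * F i = F i * Z := by
    show a * (a * b) = (a * b) * (b * a * b)
    have l : a * (a * b) = b := by rw [← mul_assoc, haa, one_mul]
    have r : (a * b) * (b * a * b) = b := by
      calc (a * b) * (b * a * b) = a * (b * b) * (a * b) := by group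
        _ = a * (a * b) := by rw [hbb, mul_one]
        _ = b := l
    rw [l, r]
  -- key2 : Z * c = c * a
  have key2 : Z * c = c * a := by
    calc Z * c = b * (a * b * c) := by rw [hZ]; group
      _ = b * (c * b * a) := by rw [habc]
      _ = (b * c) * b * a := by group
      _ = (c * b) * b * a := by rw [hbc]
      _ = c * (b * b) * a := by group
      _ = c * a := by rw [hbb]; group
  -- commutation with the other factors
  have hcommA : ∀ k, 1 ≤ k → k ≤ g - 1 → k ≠ j → k ≠ i → Commute a (F k) := by
    intro k hk1 hk2 hkj hki
    have c1 : Commute a (Y k j) :=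
      comm_of_sq haa (sq (h1 k j hk1 hk2 hj1 (by omega) hkj))
        (h2a i j k hi1 hi2 hj1 (by omega) hk1 hk2 hij (Ne.symm hki) (Ne.symm hkj))
    have c2 : Commute a (Y k g) :=
      comm_of_sq haa (sq (h1 k g hk1 hk2 hgg le_rfl (by omega)))
        (h2b i j k g hi1 hi2 hj1 (by omega) hk1 hk2 hgg le_rfl hij (Ne.symm hki) (by omega)
          (Ne.symm hkj) (by omega) (by omega))
    exact c1.mul_right c2
  have hcommB : ∀ k, 1 ≤ k → k ≤ g - 1 → k ≠ j → k ≠ i → Commute b (F k) := by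
    intro k hk1 hk2 hkj hki
    have c1 : Commute b (Y k j) :=
      comm_of_sq hbb (sq (h1 k j hk1 hk2 hj1 (by omega) hkj))
        (h2b i g k j hi1 hi2 hgg le_rfl hk1 hk2 hj1 (by omega) (by omega) (Ne.symm hki)
          hij (by omega) (by omega) hkj)
    have c2 : Commute b (Y k g) :=
      comm_of_sq hbb (sq (h1 k g hk1 hk2 hgg le_rfl (by omega)))
        (h2a i g k hi1 hi2 hgg le_rfl hk1 hk2 (by omega) (Ne.symm hki) (by omega))
    exact c1.mul_right c2
  have hcommZ : ∀ k, 1 ≤ k → k ≤ g - 1 → k ≠ j → k ≠ i → Commute Z (F k) := by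
    intro k hk1 hk2 hkj hki
    exact ((hcommB k hk1 hk2 hkj hki).mul_left (hcommA k hk1 hk2 hkj hki)).mul_left
      (hcommB k hk1 hk2 hkj hki)
  -- membership facts about L
  have hmemL : ∀ k, k ∈ L ↔ (1 ≤ k ∧ k ≤ g - 1 ∧ k ≠ j) := by
    intro k
    simp only [hL, List.mem_filter, List.mem_range'_1, decide_eq_true_eq]
    constructor
    · rintro ⟨⟨h1, h2⟩, h3⟩; exact ⟨h1, by omega, h3⟩
    · rintro ⟨h1, h2, h3⟩; exact ⟨⟨h1, by omega⟩, h3⟩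
  have hiL : i ∈ L := (hmemL i).2 ⟨hi1, hi2, hij⟩
  have hnodup : L.Nodup := List.Nodup.filter _ (List.nodup_range' (s := 1) (n := g - 1))
  obtain ⟨s, t, hst⟩ := List.append_of_mem hiL
  -- i not in s, t
  have hnodup' : (s ++ i :: t).Nodup := hst ▸ hnodup
  have his : i ∉ s := fun h => (List.disjoint_of_nodup_append hnodup') h (List.mem_cons_self (a := i) (l := t))
  have hit : i ∉ t := by
    have := (List.nodup_append.mp hnodup').2.1
    exact (List.nodup_cons.mp this).1
  -- commuting with products
  have hAs : Commute a ((s.map F).prod) := by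
    apply Commute.list_prod_right
    intro x hx
    simp only [List.mem_map] at hx
    obtain ⟨k, hk, rfl⟩ := hx
    have hkL : k ∈ L := hst ▸ (List.mem_append_left _ hk)
    obtain ⟨hk1, hk2, hkj⟩ := (hmemL k).1 hkL
    exact hcommA k hk1 hk2 hkj (fun h => his (h ▸ hk))
  have hZt : Commute Z ((t.map F).prod) := by
    apply Commute.list_prod_right
    intro x hx
    simp only [List.mem_map] at hx
    obtain ⟨k, hk, rfl⟩ := hx
    have hkL : k ∈ L := hst ▸ (List.mem_append_right _ (List.mem_cons_of_mem _ hk))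
    obtain ⟨hk1, hk2, hkj⟩ := (hmemL k).1 hkL
    exact hcommZ k hk1 hk2 hkj (fun h => hit (h ▸ hk))
  -- put it all together
  have hprod : (L.map F).prod = (s.map F).prod * (F i * (t.map F).prod) := by
    rw [hst, List.map_append, List.prod_append, List.map_cons, List.prod_cons]
  rw [hYgj, hprod]
  calc a * ((s.map F).prod * (F i * (t.map F).prod) * c)
      = ((s.map F).prod) * ((a * F i) * ((t.map F).prod * c)) := by
        rw [← mul_assoc, ← mul_assoc, ← mul_assoc, hAs.eq]; group
    _ = ((s.map F).prod) * (F i * ((Z * (t.map F).prod) * c)) := by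
        rw [key1]; group
    _ = ((s.map F).prod) * (F i * (((t.map F).prod * (Z * c)))) := by
        rw [hZt.eq]; group
    _ = ((s.map F).prod) * (F i * (((t.map F).prod * (c * a)))) := by rw [key2]
    _ = (s.map F).prod * (F i * (t.map F).prod) * c * a := by group
end

section
/- Let A be a group generated by elements x_{i,j} indexed by pairs 1 ≤ i < j ≤ g, subject to the relations that every generator has order dividing 2 and every two generators commute (so A is a ℤ/2ℤ-module), together with the relations r_i = 1 for 2 ≤ i ≤ g-1, where r_i = (x_{1,i}x_{1,g})⋯(x_{i-1,i}x_{i-1,g})(x_{i,i+1}x_{i+1,g})⋯(x_{i,g-1}x_{g-1,g}), and additionally x_{1,g}x_{2,g}⋯x_{g-1,g} = 1 if g is odd. Then A is isomorphic to (ℤ/2ℤ)^{C(g-1,2)} if g is odd, and to (ℤ/2ℤ)^{C(g-1,2)+1} if g is even. -/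
/-- Index set for the generators `x_{i,j}`, `1 ≤ i < j ≤ g`. -/
def PairIdx (g : ℕ) := {p : ℕ × ℕ // 1 ≤ p.1 ∧ p.1 < p.2 ∧ p.2 ≤ g}

/-- The generator `x_{a,b}` as an element of the free group (for in-range pairs). -/
def xg (g a b : ℕ) : FreeGroup (PairIdx g) :=
  if h : 1 ≤ a ∧ a < b ∧ b ≤ g then FreeGroup.of ⟨(a, b), h⟩ else 1

/-- The word `r_i = (x_{1,i}x_{1,g})⋯(x_{i-1,i}x_{i-1,g})(x_{i,i+1}x_{i+1,g})⋯(x_{i,g-1}x_{g-1,g})`. -/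
def rword (g i : ℕ) : FreeGroup (PairIdx g) :=
  (((List.range' 1 (i - 1)).map (fun k => xg g k i * xg g k g)).prod) *
    (((List.range' (i + 1) (g - 1 - i)).map (fun k => xg g i k * xg g k g)).prod)

/-- The relators: squares of generators, commutators of pairs of generators,
the words `r_i` for `2 ≤ i ≤ g-1`, and `x_{1,g}x_{2,g}⋯x_{g-1,g}` if `g` is odd. -/
def rels (g : ℕ) : Set (FreeGroup (PairIdx g)) :=
  {w | (∃ p : PairIdx g, w = FreeGroup.of p * FreeGroup.of p) ∨
    (∃ p q : PairIdx g,
      w = FreeGroup.of p * FreeGroup.of q * (FreeGroup.of p)⁻¹ * (FreeGroup.of q)⁻¹) ∨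
    (∃ i, 2 ≤ i ∧ i ≤ g - 1 ∧ w = rword g i) ∨
    (Odd g ∧ w = ((List.range' 1 (g - 1)).map (fun k => xg g k g)).prod)}

/-! ### Auxiliary index-set combinatorics -/

/-- The index set of the "free" generators. -/
def SIdx (g : ℕ) := {p : ℕ × ℕ // (2 ≤ p.1 ∧ p.1 < p.2 ∧ p.2 ≤ g) ∨ (Even g ∧ p = (1, g))}

instance (g : ℕ) : DecidableEq (SIdx g) := fun a b =>
  decidable_of_iff (a.1 = b.1) Subtype.ext_iff.symm

/-- The Finset of pairs `(i,j)` with `2 ≤ i < j ≤ g`. -/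
def mainFinset (g : ℕ) : Finset (ℕ × ℕ) :=
  (Finset.Icc 2 g).biUnion (fun j => (Finset.Ico 2 j).image (fun i => (i, j)))

theorem mem_mainFinset (g : ℕ) (p : ℕ × ℕ) :
    p ∈ mainFinset g ↔ (2 ≤ p.1 ∧ p.1 < p.2 ∧ p.2 ≤ g) := by
  simp only [mainFinset, Finset.mem_biUnion, Finset.mem_image, Finset.mem_Icc, Finset.mem_Ico]
  constructor
  · rintro ⟨j, ⟨hj2, hjg⟩, i, ⟨hi2, hij⟩, rfl⟩
    exact ⟨hi2, hij, hjg⟩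
  · rintro ⟨h1, h2, h3⟩
    exact ⟨p.2, ⟨by omega, h3⟩, p.1, ⟨h1, h2⟩, rfl⟩

theorem card_mainFinset (g : ℕ) : (mainFinset g).card = (g - 1).choose 2 := by
  rw [mainFinset, Finset.card_biUnion]
  · have : ∀ j ∈ Finset.Icc 2 g, ((Finset.Ico 2 j).image (fun i => ((i, j) : ℕ × ℕ))).card
        = j - 2 := by
      intro j _
      rw [Finset.card_image_of_injective _ (fun a b h => (Prod.ext_iff.1 h).1), Nat.card_Ico]
    rw [Finset.sum_congr rfl this, ← Finset.Ico_add_one_right_eq_Icc, Finset.sum_Ico_eq_sum_range]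
    have h2 : ∀ i ∈ Finset.range (g + 1 - 2), (2 + i) - 2 = i := fun i _ => by omega
    rw [Finset.sum_congr rfl h2, Finset.sum_range_id, Nat.choose_two_right]
    congr 1 <;> omega
  · intro j hj j' hj' hne
    refine Finset.disjoint_left.2 ?_
    rintro p hp hp'
    simp only [Finset.mem_image] at hp hp'
    obtain ⟨i, _, rfl⟩ := hp
    obtain ⟨i', _, h⟩ := hp'
    exact hne ((Prod.ext_iff.1 h).2.symm)

/-- Finset for `SIdx`. -/
def sFinset (g : ℕ) : Finset (ℕ × ℕ) :=
  (if Even g then {((1 : ℕ), g)} else ∅) ∪ mainFinset g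

theorem mem_sFinset (g : ℕ) (p : ℕ × ℕ) :
    p ∈ sFinset g ↔ ((2 ≤ p.1 ∧ p.1 < p.2 ∧ p.2 ≤ g) ∨ (Even g ∧ p = (1, g))) := by
  simp only [sFinset, Finset.mem_union, mem_mainFinset]
  by_cases he : Even g <;> simp [he] <;> tauto

instance (g : ℕ) :
    Fintype {p : ℕ × ℕ // (2 ≤ p.1 ∧ p.1 < p.2 ∧ p.2 ≤ g) ∨ (Even g ∧ p = (1, g))} :=
  Fintype.ofFinset (sFinset g) (mem_sFinset g)

instance (g : ℕ) : Fintype (SIdx g) := by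
  unfold SIdx; infer_instance

theorem card_sFinset (g : ℕ) :
    (sFinset g).card = (g - 1).choose 2 + (if Even g then 1 else 0) := by
  rw [sFinset, Finset.card_union_of_disjoint, card_mainFinset]
  · by_cases he : Even g <;> simp [he] <;> omega
  · refine Finset.disjoint_left.2 ?_
    intro p hp hp'
    rw [mem_mainFinset] at hp'
    by_cases he : Even g <;> simp [he] at hp
    subst hp
    omega

theorem card_SIdx (g : ℕ) :
    Fintype.card (SIdx g) = (g - 1).choose 2 + (if Even g then 1 else 0) := by
  rw [← card_sFinset g, ← Fintype.card_coe (sFinset g)]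
  exact Fintype.card_congr (Equiv.subtypeEquivRight (fun p => (mem_sFinset g p).symm))

/-! ### Char-2 helpers -/

theorem cancel2 {V : Type*} [AddCommGroup V] (h2 : ∀ x : V, x + x = 0) {x y : V}
    (h : x + y = 0) : y = x := by
  have h' := congrArg (x + ·) h
  simpa [← add_assoc, h2 x] using h'

theorem mod_two_nsmul {V : Type*} [AddCommMonoid V] {y : V} (hy : y + y = 0) (m : ℕ) :
    m • y = (m % 2) • y := by
  have h0 : ∀ k, (2 * k) • y = 0 := by
    intro k
    induction k with
    | zero => simp
    | succ k ih => rw [Nat.mul_succ, add_nsmul, ih, zero_add, two_nsmul, hy]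
  conv_lhs => rw [← Nat.mod_add_div m 2, add_nsmul, h0, add_zero]

/-- The main character-2 computation, abstractly. -/
theorem key_calc {V : Type*} [AddCommGroup V] (h2 : ∀ x : V, x + x = 0)
    (g : ℕ) (hg : 3 ≤ g) (Y : ℕ → ℕ → V) (i : ℕ) (hi2 : 2 ≤ i) (hig : i + 1 ≤ g) :
    ∑ k ∈ Finset.Ico 1 i, (Y k i + Y k g) + ∑ k ∈ Finset.Ico (i+1) g, (Y i k + Y k g)
      = Y 1 i + ((∑ k ∈ Finset.Ico 2 i, Y k i) + (∑ k ∈ Finset.Ico (i+1) g, Y i k)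
          + (∑ k ∈ Finset.Ico 2 g, Y k g) + Y i g + Y 1 g) := by
  have h1 : ∑ k ∈ Finset.Ico 1 i, (Y k i + Y k g)
      = (Y 1 i + Y 1 g) + ∑ k ∈ Finset.Ico 2 i, (Y k i + Y k g) :=
    Finset.sum_eq_sum_Ico_succ_bot (by omega) _
  have h3 : ∑ k ∈ Finset.Ico 2 g, Y k g
      = ∑ k ∈ Finset.Ico 2 i, Y k g + (Y i g + ∑ k ∈ Finset.Ico (i+1) g, Y k g) := by
    rw [← Finset.sum_Ico_consecutive (fun k => Y k g) (show 2 ≤ i by omega)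
      (show i ≤ g by omega)]
    rw [Finset.sum_eq_sum_Ico_succ_bot (show i < g by omega)]
  rw [h1, h3, Finset.sum_add_distrib, Finset.sum_add_distrib]
  generalize ∑ k ∈ Finset.Ico 2 i, Y k i = A
  generalize ∑ k ∈ Finset.Ico 2 i, Y k g = B
  generalize ∑ k ∈ Finset.Ico (i+1) g, Y i k = C
  generalize ∑ k ∈ Finset.Ico (i+1) g, Y k g = D
  have hE := h2 (Y i g)
  generalize Y i g = E at *
  rw [← sub_eq_zero]
  rw [show Y 1 i + Y 1 g + (A + B) + (C + D)
      - (Y 1 i + (A + C + (B + (E + D)) + E + Y 1 g)) = -(E + E) by abel, hE]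
  simp

/-- products of words indexed by `List.range'` as products over `Finset.Ico`. -/
theorem word_prod {N M : Type*} [Monoid N] [CommMonoid M] (F : N →* M)
    (w : ℕ → N) (a n : ℕ) :
    F (((List.range' a n).map w).prod) = ∏ k ∈ Finset.Ico a (a + n), F (w k) := by
  induction n generalizing a with
  | zero => simp
  | succ n ih =>
      rw [List.range'_succ (s := a) (n := n) (step := 1), List.map_cons, List.prod_cons, map_mul, ih,
        Finset.prod_eq_prod_Ico_succ_bot (show a < a + (n + 1) by omega)]
      congr 1
      rw [show a + 1 + n = a + (n + 1) by omega]

/-! ### The presented group -/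

namespace IsoProof

variable (g : ℕ)

theorem mk_rels_eq_one {r : FreeGroup (PairIdx g)} (hr : r ∈ rels g) :
    PresentedGroup.mk (rels g) r = 1 :=
  (QuotientGroup.eq_one_iff r).2 (Subgroup.subset_normalClosure hr)

theorem commute_of (p q : PairIdx g) :
    Commute (PresentedGroup.of (rels := rels g) p) (PresentedGroup.of q) := by
  have h := mk_rels_eq_one g (Or.inr (Or.inl ⟨p, q, rfl⟩))
  simp only [map_mul, map_inv] at h
  have h1 : (PresentedGroup.of (rels := rels g) p) * PresentedGroup.of q *
      (PresentedGroup.of p)⁻¹ = PresentedGroup.of q := mul_inv_eq_one.mp h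
  exact mul_inv_eq_iff_eq_mul.mp h1

instance : CommGroup (PresentedGroup (rels g)) :=
  { (inferInstance : Group (PresentedGroup (rels g))) with
    mul_comm := by
      intro a b
      have ha : a ∈ Subgroup.closure (Set.range (PresentedGroup.of (rels := rels g))) := by
        rw [PresentedGroup.closure_range_of]; trivial
      have hb : b ∈ Subgroup.closure (Set.range (PresentedGroup.of (rels := rels g))) := by
        rw [PresentedGroup.closure_range_of]; trivial
      refine Subgroup.closure_induction₂
        (p := fun x y _ _ => Commute x y) ?_ ?_ ?_ ?_ ?_ ?_ ?_ ha hb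
      · rintro x y ⟨p, rfl⟩ ⟨q, rfl⟩
        exact commute_of g p q
      · exact fun x _ => Commute.one_left x
      · exact fun x _ => Commute.one_right x
      · exact fun x y z _ _ _ h1 h2 => h1.mul_left h2
      · exact fun y z x _ _ _ h1 h2 => h1.mul_right h2
      · exact fun x y _ _ h => h.inv_left
      · exact fun x y _ _ h => h.inv_right }

theorem sq_eq_one (x : PresentedGroup (rels g)) : x * x = 1 := by
  refine PresentedGroup.generated_by (rels g)
    { carrier := {x | x * x = 1}
      one_mem' := by simp
      mul_mem' := by
        intro a b ha hb
        simp only [Set.mem_setOf_eq] at *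
        rw [mul_mul_mul_comm, ha, hb, mul_one]
      inv_mem' := by
        intro a ha
        simp only [Set.mem_setOf_eq] at *
        rw [← mul_inv_rev, ha, inv_one] } ?_ x
  intro p
  have h := mk_rels_eq_one g (Or.inl ⟨p, rfl⟩)
  simp only [map_mul] at h
  exact h

theorem add_self_P (x : Additive (PresentedGroup (rels g))) : x + x = 0 :=
  sq_eq_one g x.toMul

/-- The image of `x_{a,b}` in the presented group, additively. -/
def Yv (a b : ℕ) : Additive (PresentedGroup (rels g)) :=
  Additive.ofMul (PresentedGroup.mk (rels g) (xg g a b))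

theorem Yv_sum (a n : ℕ) (w : ℕ → FreeGroup (PairIdx g)) :
    Additive.ofMul (PresentedGroup.mk (rels g) (((List.range' a n).map w).prod))
      = ∑ k ∈ Finset.Ico a (a + n),
          Additive.ofMul (PresentedGroup.mk (rels g) (w k)) := by
  rw [word_prod (PresentedGroup.mk (rels g)) _ a n]
  exact ofMul_prod _ _

theorem hRodd (ho : Odd g) (hg : 3 ≤ g) :
    ∑ k ∈ Finset.Ico 1 g, Yv g k g = 0 := by
  have h := mk_rels_eq_one g (r := ((List.range' 1 (g - 1)).map (fun k => xg g k g)).prod)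
    (Or.inr (Or.inr (Or.inr ⟨ho, rfl⟩)))
  have h2 := Yv_sum g 1 (g - 1) (fun k => xg g k g)
  rw [h, show 1 + (g - 1) = g by omega] at h2
  simpa [Yv] using h2.symm

theorem hRi (i : ℕ) (hi2 : 2 ≤ i) (hig : i ≤ g - 1) (hg : 3 ≤ g) :
    ∑ k ∈ Finset.Ico 1 i, (Yv g k i + Yv g k g)
      + ∑ k ∈ Finset.Ico (i+1) g, (Yv g i k + Yv g k g) = 0 := by
  have h := mk_rels_eq_one g (r := rword g i) (Or.inr (Or.inr (Or.inl ⟨i, hi2, hig, rfl⟩)))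
  have e1 := Yv_sum g 1 (i - 1) (fun k => xg g k i * xg g k g)
  have e2 := Yv_sum g (i+1) (g - 1 - i) (fun k => xg g i k * xg g k g)
  rw [show 1 + (i - 1) = i by omega] at e1
  rw [show (i+1) + (g - 1 - i) = g by omega] at e2
  have key : Additive.ofMul (PresentedGroup.mk (rels g) (rword g i))
      = ∑ k ∈ Finset.Ico 1 i, (Yv g k i + Yv g k g)
        + ∑ k ∈ Finset.Ico (i+1) g, (Yv g i k + Yv g k g) := by
    rw [rword, map_mul, ofMul_mul, e1, e2]
    simp only [map_mul, ofMul_mul, Yv]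
  rw [h] at key
  simpa using key.symm

/-! ### The target vector space and the expression vectors -/

/-- basic vector `δ_{(a,b)}` in `SIdx g → ZMod 2` (or `0` if out of index set). -/
def bb (a b : ℕ) : SIdx g → ZMod 2 := fun s => if ((a, b) : ℕ × ℕ) = s.1 then 1 else 0

/-- the expression of `x_{1,g}` in the free generators. -/
def tvec : SIdx g → ZMod 2 :=
  if Even g then bb g 1 g else ∑ k ∈ Finset.Ico 2 g, bb g k g

/-- the expression of `x_{a,b}` in the free generators. -/
def evec (a b : ℕ) : SIdx g → ZMod 2 :=
  if a = 1 then
    (if b = g then tvec g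
     else (∑ k ∈ Finset.Ico 2 b, bb g k b) + (∑ k ∈ Finset.Ico (b+1) g, bb g b k)
          + (∑ k ∈ Finset.Ico 2 g, bb g k g) + bb g b g + tvec g)
  else bb g a b

theorem add_self_V (x : SIdx g → ZMod 2) : x + x = 0 := funext fun s => by
  have : ∀ a : ZMod 2, a + a = 0 := by decide
  exact this _

theorem bb_single (a b : ℕ) (h : (2 ≤ (a,b).1 ∧ (a,b).1 < (a,b).2 ∧ (a,b).2 ≤ g)
    ∨ (Even g ∧ (a,b) = (1, g))) :
    bb g a b = Pi.single (⟨(a, b), h⟩ : SIdx g) 1 := by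
  funext s
  simp only [bb]
  erw [Pi.single_apply]
  by_cases hs : s.1 = ((a, b) : ℕ × ℕ)
  · rw [if_pos hs.symm]
    exact (if_pos (Subtype.ext hs : s = ⟨(a, b), h⟩)).symm
  · rw [if_neg (fun hh => hs hh.symm)]
    exact (if_neg (fun hh : s = ⟨(a, b), h⟩ => hs (congrArg Subtype.val hh))).symm

theorem evec_ge2 (a b : ℕ) (ha : 2 ≤ a) : evec g a b = bb g a b := if_neg (by omega)

theorem evec_1g : evec g 1 g = tvec g := by rw [evec, if_pos rfl, if_pos rfl]

theorem evec_1b (b : ℕ) (hb : b ≠ g) :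
    evec g 1 b = (∑ k ∈ Finset.Ico 2 b, bb g k b) + (∑ k ∈ Finset.Ico (b+1) g, bb g b k)
      + (∑ k ∈ Finset.Ico 2 g, bb g k g) + bb g b g + tvec g := by
  rw [evec, if_pos rfl, if_neg hb]

/-! ### The forward homomorphism -/

/-- Images of the generators. -/
def fgen : PairIdx g → Multiplicative (SIdx g → ZMod 2) :=
  fun p => Multiplicative.ofAdd (evec g p.1.1 p.1.2)

theorem lift_xg (a b : ℕ) (h : 1 ≤ a ∧ a < b ∧ b ≤ g) :
    FreeGroup.lift (fgen g) (xg g a b) = Multiplicative.ofAdd (evec g a b) := by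
  rw [xg, dif_pos h]
  exact FreeGroup.lift_apply_of

theorem Ev_sum (a n : ℕ) (w : ℕ → FreeGroup (PairIdx g)) :
    Multiplicative.toAdd (FreeGroup.lift (fgen g) (((List.range' a n).map w).prod))
      = ∑ k ∈ Finset.Ico a (a + n),
          Multiplicative.toAdd (FreeGroup.lift (fgen g) (w k)) := by
  rw [word_prod (FreeGroup.lift (fgen g)) _ a n]
  exact toAdd_prod _ _

theorem hrels (hg : 3 ≤ g) : ∀ r ∈ rels g, FreeGroup.lift (fgen g) r = 1 := by
  rintro r (⟨p, rfl⟩ | ⟨p, q, rfl⟩ | ⟨i, hi2, hig, rfl⟩ | ⟨ho, rfl⟩)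
  · simp only [map_mul, FreeGroup.lift_apply_of, fgen]
    rw [← ofAdd_add, add_self_V]
    rfl
  · simp only [map_mul, map_inv, FreeGroup.lift_apply_of]
    rw [mul_comm (fgen g p) (fgen g q)]
    group
  · refine Multiplicative.toAdd.injective ?_
    rw [rword, map_mul, toAdd_mul]
    have e1 := Ev_sum g 1 (i - 1) (fun k => xg g k i * xg g k g)
    have e2 := Ev_sum g (i+1) (g - 1 - i) (fun k => xg g i k * xg g k g)
    rw [show 1 + (i - 1) = i by omega] at e1
    rw [show (i+1) + (g - 1 - i) = g by omega] at e2
    rw [e1, e2]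
    have c1 : ∀ k ∈ Finset.Ico 1 i,
        Multiplicative.toAdd (FreeGroup.lift (fgen g) (xg g k i * xg g k g))
          = evec g k i + evec g k g := by
      intro k hk
      rw [Finset.mem_Ico] at hk
      rw [map_mul, toAdd_mul, lift_xg g k i ⟨hk.1, hk.2, by omega⟩,
        lift_xg g k g ⟨hk.1, by omega, le_refl g⟩]
      rfl
    have c2 : ∀ k ∈ Finset.Ico (i+1) g,
        Multiplicative.toAdd (FreeGroup.lift (fgen g) (xg g i k * xg g k g))
          = evec g i k + evec g k g := by
      intro k hk
      rw [Finset.mem_Ico] at hk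
      rw [map_mul, toAdd_mul, lift_xg g i k ⟨by omega, by omega, by omega⟩,
        lift_xg g k g ⟨by omega, by omega, le_refl g⟩]
      rfl
    rw [Finset.sum_congr rfl c1, Finset.sum_congr rfl c2,
      key_calc (add_self_V g) g hg (fun a b => evec g a b) i hi2 (by omega)]
    show evec g 1 i + _ = Multiplicative.toAdd 1
    have d1 : ∑ k ∈ Finset.Ico 2 i, evec g k i = ∑ k ∈ Finset.Ico 2 i, bb g k i :=
      Finset.sum_congr rfl fun k hk => evec_ge2 g k i (Finset.mem_Ico.1 hk).1
    have d2 : ∑ k ∈ Finset.Ico (i+1) g, evec g i k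
        = ∑ k ∈ Finset.Ico (i+1) g, bb g i k :=
      Finset.sum_congr rfl fun k _ => evec_ge2 g i k hi2
    have d3 : ∑ k ∈ Finset.Ico 2 g, evec g k g = ∑ k ∈ Finset.Ico 2 g, bb g k g :=
      Finset.sum_congr rfl fun k hk => evec_ge2 g k g (Finset.mem_Ico.1 hk).1
    rw [d1, d2, d3, evec_ge2 g i g hi2, evec_1g g, ← evec_1b g i (by omega), add_self_V]
    rfl
  · refine Multiplicative.toAdd.injective ?_
    have e1 := Ev_sum g 1 (g - 1) (fun k => xg g k g)
    rw [show 1 + (g - 1) = g by omega] at e1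
    rw [e1]
    have hg3 : 3 ≤ g := by
      rcases ho with ⟨m, rfl⟩
      rcases Nat.lt_or_ge m 1 with h | h
      · interval_cases m <;> simp_all [rels]
      · omega
    have c1 : ∀ k ∈ Finset.Ico 1 g,
        Multiplicative.toAdd (FreeGroup.lift (fgen g) (xg g k g)) = evec g k g := by
      intro k hk
      rw [Finset.mem_Ico] at hk
      rw [lift_xg g k g ⟨hk.1, hk.2, le_refl g⟩]
      rfl
    rw [Finset.sum_congr rfl c1,
      Finset.sum_eq_sum_Ico_succ_bot (show 1 < g by omega), evec_1g g]
    have c2 : ∀ k ∈ Finset.Ico 2 g, evec g k g = bb g k g := by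
      intro k hk
      rw [Finset.mem_Ico] at hk
      exact evec_ge2 g k g hk.1
    rw [Finset.sum_congr rfl c2, tvec, if_neg (by simpa [Nat.even_iff, Nat.odd_iff] using ho),
      add_self_V]
    rfl

/-- The forward homomorphism. -/
def phi (hg : 3 ≤ g) : PresentedGroup (rels g) →* Multiplicative (SIdx g → ZMod 2) :=
  PresentedGroup.toGroup (hrels g hg)

/-! ### The backward homomorphism -/

/-- The backward map. -/
def psiHom : (SIdx g → ZMod 2) →+ Additive (PresentedGroup (rels g)) :=
  AddMonoidHom.mk' (fun v => ∑ s : SIdx g, (v s).val • Yv g s.1.1 s.1.2) (by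
    intro v w
    rw [← Finset.sum_add_distrib]
    refine Finset.sum_congr rfl fun s _ => ?_
    show ((v s + w s).val) • _ = _
    rw [ZMod.val_add, ← mod_two_nsmul (add_self_P g (Yv g s.1.1 s.1.2)), add_nsmul])

theorem psiHom_apply (v : SIdx g → ZMod 2) :
    psiHom g v = ∑ s : SIdx g, (v s).val • Yv g s.1.1 s.1.2 := rfl

theorem psi_bb (a b : ℕ) (h : (2 ≤ (a,b).1 ∧ (a,b).1 < (a,b).2 ∧ (a,b).2 ≤ g)
    ∨ (Even g ∧ (a,b) = (1, g))) :
    psiHom g (bb g a b) = Yv g a b := by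
  rw [psiHom_apply]
  refine (Finset.sum_eq_single (⟨(a, b), h⟩ : SIdx g) ?_ ?_).trans ?_
  · intro s _ hs
    simp only [bb]
    rw [if_neg (fun heq => hs (Subtype.ext heq.symm))]
    simp
  · intro h'
    exact absurd (Finset.mem_univ _) h'
  · show (bb g a b ⟨(a, b), h⟩).val • Yv g a b = Yv g a b
    simp only [bb]
    rw [if_pos trivial, ZMod.val_one, one_nsmul]

theorem psi_t (hg : 3 ≤ g) : psiHom g (tvec g) = Yv g 1 g := by
  by_cases he : Even g
  · rw [tvec, if_pos he]
    exact psi_bb g 1 g (Or.inr ⟨he, rfl⟩)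
  · rw [tvec, if_neg he, map_sum]
    have c : ∀ k ∈ Finset.Ico 2 g, psiHom g (bb g k g) = Yv g k g := by
      intro k hk
      rw [Finset.mem_Ico] at hk
      exact psi_bb g k g (Or.inl ⟨hk.1, hk.2, le_refl g⟩)
    rw [Finset.sum_congr rfl c]
    have h0 := hRodd g (Nat.not_even_iff_odd.1 he) hg
    rw [Finset.sum_eq_sum_Ico_succ_bot (show 1 < g by omega)] at h0
    exact cancel2 (add_self_P g) h0

theorem psi_phi (hg : 3 ≤ g) (p : PairIdx g) :
    psiHom g (evec g p.1.1 p.1.2)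
      = Additive.ofMul (PresentedGroup.of (rels := rels g) p) := by
  obtain ⟨⟨a, b⟩, hp⟩ := p
  have hYv : Additive.ofMul (PresentedGroup.of (rels := rels g) ⟨(a, b), hp⟩) = Yv g a b := by
    rw [Yv, xg, dif_pos hp]
    rfl
  rw [hYv]
  show psiHom g (evec g a b) = Yv g a b
  rcases Nat.lt_or_ge a 2 with ha | ha
  · -- a = 1
    have ha1 : a = 1 := by omega
    subst ha1
    by_cases hbg : b = g
    · rw [hbg, evec_1g]
      exact psi_t g hg
    · have hb2 : 2 ≤ b := hp.2.1
      have hbg' : b < g := lt_of_le_of_ne hp.2.2 hbg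
      rw [evec_1b g b hbg]
      rw [map_add, map_add, map_add, map_add, map_sum, map_sum, map_sum]
      have c1 : ∀ k ∈ Finset.Ico 2 b, psiHom g (bb g k b) = Yv g k b := by
        intro k hk
        rw [Finset.mem_Ico] at hk
        exact psi_bb g k b (Or.inl ⟨hk.1, hk.2, by omega⟩)
      have c2 : ∀ k ∈ Finset.Ico (b+1) g, psiHom g (bb g b k) = Yv g b k := by
        intro k hk
        rw [Finset.mem_Ico] at hk
        exact psi_bb g b k (Or.inl ⟨by omega, by omega, by omega⟩)
      have c3 : ∀ k ∈ Finset.Ico 2 g, psiHom g (bb g k g) = Yv g k g := by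
        intro k hk
        rw [Finset.mem_Ico] at hk
        exact psi_bb g k g (Or.inl ⟨hk.1, hk.2, le_refl g⟩)
      rw [Finset.sum_congr rfl c1, Finset.sum_congr rfl c2, Finset.sum_congr rfl c3,
        psi_bb g b g (Or.inl ⟨hb2, hbg', le_refl g⟩), psi_t g hg]
      have hr := hRi g b hb2 (by omega) hg
      rw [key_calc (add_self_P g) g hg (fun x y => Yv g x y) b hb2 (by omega)] at hr
      exact cancel2 (add_self_P g) hr
  · rw [evec_ge2 g a b ha]
    exact psi_bb g a b (Or.inl ⟨ha, hp.2⟩)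

theorem evec_sidx (s : SIdx g) : evec g s.1.1 s.1.2 = Pi.single s 1 := by
  rcases s with ⟨⟨a, b⟩, hs⟩
  rcases hs with ⟨h1, h2, h3⟩ | ⟨he, hp⟩
  · rw [evec_ge2 g a b h1]
    exact bb_single g a b (Or.inl ⟨h1, h2, h3⟩)
  · obtain ⟨ha, hb⟩ := Prod.ext_iff.1 hp
    simp only at ha hb
    subst ha
    have hb' := hb.symm
    subst hb'
    rw [evec_1g, tvec, if_pos he]
    exact bb_single g 1 g (Or.inr ⟨he, rfl⟩)

theorem val_smul_single (c : ZMod 2) (s : SIdx g) :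
    c.val • (Pi.single s (1 : ZMod 2) : SIdx g → ZMod 2) = Pi.single s c := by
  rcases (by decide : ∀ x : ZMod 2, x = 0 ∨ x = 1) c with rfl | rfl
  · rw [ZMod.val_zero, zero_nsmul, Pi.single_zero]
  · rw [ZMod.val_one, one_nsmul]

theorem phi_Yv (hg : 3 ≤ g) (s : SIdx g) :
    phi g hg (Additive.toMul (Yv g s.1.1 s.1.2)) = Multiplicative.ofAdd (Pi.single s 1) := by
  have hrange : 1 ≤ s.1.1 ∧ s.1.1 < s.1.2 ∧ s.1.2 ≤ g := by
    rcases s.2 with ⟨h1, h2, h3⟩ | ⟨he, hp⟩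
    · exact ⟨by omega, h2, h3⟩
    · rw [hp]
      exact ⟨le_refl 1, by omega, le_refl g⟩
  show FreeGroup.lift (fgen g) (xg g s.1.1 s.1.2) = _
  rw [lift_xg g s.1.1 s.1.2 hrange, evec_sidx]

theorem phi_psi (hg : 3 ≤ g) (v : SIdx g → ZMod 2) :
    phi g hg (Additive.toMul (psiHom g v)) = Multiplicative.ofAdd v := by
  rw [psiHom_apply, toMul_sum, map_prod]
  have c1 : ∀ s ∈ Finset.univ, phi g hg (Additive.toMul ((v s).val • Yv g s.1.1 s.1.2))
      = Multiplicative.ofAdd (Pi.single s (v s)) := by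
    intro s _
    rw [toMul_nsmul, map_pow, phi_Yv g hg s, ← ofAdd_nsmul, val_smul_single]
  rw [Finset.prod_congr rfl c1, ← ofAdd_sum, Finset.univ_sum_single]

/-! ### The isomorphism -/

/-- The backward homomorphism, multiplicatively. -/
def psiMul : Multiplicative (SIdx g → ZMod 2) →* PresentedGroup (rels g) :=
  AddMonoidHom.toMultiplicativeLeft (psiHom g)

theorem comp1 (hg : 3 ≤ g) : (psiMul g).comp (phi g hg) = MonoidHom.id _ := by
  refine PresentedGroup.ext fun p => ?_
  show psiMul g (phi g hg (PresentedGroup.of p)) = PresentedGroup.of p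
  rw [phi, PresentedGroup.toGroup.of]
  show Additive.toMul (psiHom g (evec g p.1.1 p.1.2)) = _
  rw [psi_phi g hg p]
  rfl

theorem comp2 (hg : 3 ≤ g) : (phi g hg).comp (psiMul g) = MonoidHom.id _ := by
  refine MonoidHom.ext fun v => ?_
  show phi g hg (Additive.toMul (psiHom g (Multiplicative.toAdd v))) = v
  rw [phi_psi g hg]
  rfl

/-- The main isomorphism. -/
def bigEquiv (hg : 3 ≤ g) : PresentedGroup (rels g) ≃* Multiplicative (SIdx g → ZMod 2) :=
  MonoidHom.toMulEquiv (phi g hg) (psiMul g) (comp1 g hg) (comp2 g hg)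

end IsoProof

/-- The presented group is isomorphic to `(ℤ/2ℤ)^{C(g-1,2)}` if `g` is odd,
and to `(ℤ/2ℤ)^{C(g-1,2)+1}` if `g` is even. -/
theorem presentedGroup_iso_elementary_abelian (g : ℕ) (hg : 3 ≤ g) :
    (Odd g → Nonempty (PresentedGroup (rels g) ≃*
      Multiplicative (Fin ((g - 1).choose 2) → ZMod 2))) ∧
    (Even g → Nonempty (PresentedGroup (rels g) ≃*
      Multiplicative (Fin ((g - 1).choose 2 + 1) → ZMod 2))) := by
  constructor
  · intro ho
    have hcard : Fintype.card (SIdx g) = (g - 1).choose 2 := by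
      rw [card_SIdx, if_neg (by simpa [Nat.even_iff, Nat.odd_iff] using ho), add_zero]
    have e : SIdx g ≃ Fin ((g - 1).choose 2) := Fintype.equivFinOfCardEq hcard
    exact ⟨(IsoProof.bigEquiv g hg).trans
      (AddEquiv.toMultiplicative (AddEquiv.arrowCongr e (AddEquiv.refl (ZMod 2))))⟩
  · intro he
    have hcard : Fintype.card (SIdx g) = (g - 1).choose 2 + 1 := by
      rw [card_SIdx, if_pos he]
    have e : SIdx g ≃ Fin ((g - 1).choose 2 + 1) := Fintype.equivFinOfCardEq hcard
    exact ⟨(IsoProof.bigEquiv g hg).trans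
      (AddEquiv.toMultiplicative (AddEquiv.arrowCongr e (AddEquiv.refl (ZMod 2))))⟩
end

section
/- Let G be a group and let c₁, ..., c_k be elements of G satisfying the braid relations c_i c_{i+1} c_i = c_{i+1} c_i c_{i+1} for 1 ≤ i ≤ k-1 and the commutation relations c_i c_j = c_j c_i for |i-j| ≥ 2. Then (c₁c₂⋯c_k)^{k+1} lies in the subgroup of G generated by all conjugates of the squares c_i² (i.e., the subgroup generated by {g c_i² g⁻¹ : g ∈ G, 1 ≤ i ≤ k}). -/
namespace ChainPowAux

variable {G : Type*} [Group G]

/-- increasing product `c a * c (a+1) * ⋯ * c (a+n-1)` -/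
def up (c : ℕ → G) (a n : ℕ) : G := ((List.range' a n).map c).prod

/-- decreasing product `c (b+n-1) * ⋯ * c (b+1) * c b` -/
def dn (c : ℕ → G) (b n : ℕ) : G := (((List.range' b n).map c).reverse).prod

lemma up_zero (c : ℕ → G) (a : ℕ) : up c a 0 = 1 := rfl
lemma dn_zero (c : ℕ → G) (b : ℕ) : dn c b 0 = 1 := rfl
lemma up_one (c : ℕ → G) (a : ℕ) : up c a 1 = c a := by simp [up]
lemma dn_one (c : ℕ → G) (b : ℕ) : dn c b 1 = c b := by simp [dn]

lemma up_succ_right (c : ℕ → G) (a n : ℕ) : up c a (n + 1) = up c a n * c (a + n) := by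
  simp [up, List.range'_concat]

lemma up_succ_left (c : ℕ → G) (a n : ℕ) : up c a (n + 1) = c a * up c (a + 1) n := by
  simp [up, List.range'_succ]

lemma up_two (c : ℕ → G) (a : ℕ) : up c a 2 = c a * c (a + 1) := by
  rw [show (2:ℕ) = 1 + 1 from rfl, up_succ_right, up_one]

lemma dn_succ_left (c : ℕ → G) (b n : ℕ) : dn c b (n + 1) = c (b + n) * dn c b n := by
  simp [dn, List.range'_concat]

lemma dn_succ_right (c : ℕ → G) (b n : ℕ) : dn c b (n + 1) = dn c (b + 1) n * c b := by
  simp [dn, List.range'_succ]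

lemma up_add (c : ℕ → G) (a m n : ℕ) : up c a (m + n) = up c a m * up c (a + m) n := by
  rw [up, up, up, ← List.prod_append, ← List.map_append]
  congr 1
  rw [show List.range' a m ++ List.range' (a + m) n = List.range' a (n + m) from by
    have := (List.range'_append : List.range' a m 1 ++ List.range' (a + 1 * m) n 1 = _)
    rwa [one_mul, Nat.add_comm m n] at this, Nat.add_comm n m]

lemma commute_up (c : ℕ → G) {x : ℕ} (a n : ℕ)
    (h : ∀ i, a ≤ i → i < a + n → c x * c i = c i * c x) : c x * up c a n = up c a n * c x := by
  refine (Commute.list_prod_right _ _ ?_).eq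
  intro y hy
  simp only [List.mem_map] at hy
  obtain ⟨i, hi, rfl⟩ := hy
  rw [List.mem_range'_1] at hi
  exact h i hi.1 hi.2

lemma commute_dn (c : ℕ → G) {x : ℕ} (b n : ℕ)
    (h : ∀ i, b ≤ i → i < b + n → c x * c i = c i * c x) : c x * dn c b n = dn c b n * c x := by
  refine (Commute.list_prod_right _ _ ?_).eq
  intro y hy
  simp only [List.mem_reverse, List.mem_map] at hy
  obtain ⟨i, hi, rfl⟩ := hy
  rw [List.mem_range'_1] at hi
  exact h i hi.1 hi.2

lemma commute_up_dn (c : ℕ → G) (a m b n : ℕ)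
    (h : ∀ i j, a ≤ i → i < a + m → b ≤ j → j < b + n → c i * c j = c j * c i) :
    up c a m * dn c b n = dn c b n * up c a m := by
  refine (Commute.list_prod_right _ _ ?_).eq
  intro y hy
  simp only [List.mem_reverse, List.mem_map] at hy
  obtain ⟨j, hj, rfl⟩ := hy
  rw [List.mem_range'_1] at hj
  refine (Commute.list_prod_left _ _ ?_)
  intro z hz
  simp only [List.mem_map] at hz
  obtain ⟨i, hi, rfl⟩ := hz
  rw [List.mem_range'_1] at hi
  exact h i j hi.1 hi.2 hj.1 hj.2

/-- move a commuting element across, inside a right-associated product -/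
lemma swap {a b : G} (h : a * b = b * a) (x : G) : a * (b * x) = b * (a * x) := by
  rw [← mul_assoc, h, mul_assoc]

/-- rewrite a length-3 chunk inside a right-associated product -/
lemma chunk3 {a b f d e g : G} (h : a * b * f = d * e * g) (x : G) :
    a * (b * (f * x)) = d * (e * (g * x)) := by
  rw [← mul_assoc, ← mul_assoc, h, mul_assoc, mul_assoc]

/-- key lemma M:  `D(t,j) · U(j-1,t) = U(j-1,t) · D(t-1,j-1)` for `t = (p+2)+n`, `j = p+2` -/
lemma lemM (c : ℕ → G) (k : ℕ)
    (hbraid : ∀ i, 1 ≤ i → i ≤ k - 1 → c i * c (i + 1) * c i = c (i + 1) * c i * c (i + 1))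
    (hcomm : ∀ i j, 1 ≤ i → i ≤ k → 1 ≤ j → j ≤ k → i + 2 ≤ j → c i * c j = c j * c i) :
    ∀ n p, p + 2 + n ≤ k →
    dn c (p + 2) (n + 1) * up c (p + 1) (n + 2) = up c (p + 1) (n + 2) * dn c (p + 1) (n + 1) := by
  intro n
  induction n with
  | zero =>
    intro p hp
    have hb := hbraid (p + 1) (by omega) (by omega)
    simp only [Nat.zero_add, show p + 1 + 1 = p + 2 from rfl] at hb ⊢
    rw [dn_one, dn_one, up_two, show p + 1 + 1 = p + 2 from rfl]
    rw [hb]; simp only [mul_assoc]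
  | succ n IH =>
    intro p hp
    have IHp := IH p (by omega)
    have hc1 : c (p + n + 3) * dn c (p + 1) (n + 1) = dn c (p + 1) (n + 1) * c (p + n + 3) := by
      refine commute_dn c _ _ (fun i hi1 hi2 => ?_)
      exact (hcomm i (p + n + 3) (by omega) (by omega) (by omega) (by omega) (by omega)).symm
    have hc2 : c (p + n + 3) * up c (p + 1) (n + 1) = up c (p + 1) (n + 1) * c (p + n + 3) := by
      refine commute_up c _ _ (fun i hi1 hi2 => ?_)
      exact (hcomm i (p + n + 3) (by omega) (by omega) (by omega) (by omega) (by omega)).symm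
    have hb := hbraid (p + n + 2) (by omega) (by omega)
    -- hb : c (p+n+2) * c (p+n+3) * c (p+n+2) = c (p+n+3) * c (p+n+2) * c (p+n+3)
    simp only [show p + n + 2 + 1 = p + n + 3 from rfl] at hb
    have eDj2 : dn c (p + 2) (n + 2) = c (p + n + 3) * dn c (p + 2) (n + 1) := by
      rw [dn_succ_left, show p + 2 + (n + 1) = p + n + 3 from by omega]
    have eU3 : up c (p + 1) (n + 3) = up c (p + 1) (n + 2) * c (p + n + 3) := by
      rw [show n + 3 = (n + 2) + 1 from rfl, up_succ_right,
        show p + 1 + (n + 2) = p + n + 3 from by omega]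
    have eU2 : up c (p + 1) (n + 2) = up c (p + 1) (n + 1) * c (p + n + 2) := by
      rw [show n + 2 = (n + 1) + 1 from rfl, up_succ_right,
        show p + 1 + (n + 1) = p + n + 2 from by omega]
    have eD2 : dn c (p + 1) (n + 2) = c (p + n + 2) * dn c (p + 1) (n + 1) := by
      rw [dn_succ_left, show p + 1 + (n + 1) = p + n + 2 from by omega]
    calc dn c (p + 2) (n + 2) * up c (p + 1) (n + 3)
        = c (p + n + 3) * (dn c (p + 2) (n + 1) * up c (p + 1) (n + 2)) * c (p + n + 3) := by
          rw [eDj2, eU3]; simp only [mul_assoc]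
      _ = c (p + n + 3) * (up c (p + 1) (n + 2) * dn c (p + 1) (n + 1)) * c (p + n + 3) := by
          rw [IHp]
      _ = c (p + n + 3) * up c (p + 1) (n + 2) * (dn c (p + 1) (n + 1) * c (p + n + 3)) := by
          simp only [mul_assoc]
      _ = c (p + n + 3) * up c (p + 1) (n + 2) * (c (p + n + 3) * dn c (p + 1) (n + 1)) := by
          rw [hc1]
      _ = c (p + n + 3) * up c (p + 1) (n + 1) * (c (p + n + 2) *
            (c (p + n + 3) * dn c (p + 1) (n + 1))) := by
          rw [eU2]; simp only [mul_assoc]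
      _ = up c (p + 1) (n + 1) * (c (p + n + 3) * (c (p + n + 2) *
            (c (p + n + 3) * dn c (p + 1) (n + 1)))) := by
          rw [hc2]; simp only [mul_assoc]
      _ = up c (p + 1) (n + 1) * (c (p + n + 2) * (c (p + n + 3) *
            (c (p + n + 2) * dn c (p + 1) (n + 1)))) := by
          rw [chunk3 hb.symm]
      _ = up c (p + 1) (n + 3) * dn c (p + 1) (n + 2) := by
          rw [eU3, eU2, eD2]; simp only [mul_assoc]

/-- lemma L: `D(t,j) · U(1,t-1) · c_t = U(1,t-1) · D(t,j-1)` for `t = (p+2)+n`, `j = p+2` -/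
lemma lemL (c : ℕ → G) (k : ℕ)
    (hbraid : ∀ i, 1 ≤ i → i ≤ k - 1 → c i * c (i + 1) * c i = c (i + 1) * c i * c (i + 1))
    (hcomm : ∀ i j, 1 ≤ i → i ≤ k → 1 ≤ j → j ≤ k → i + 2 ≤ j → c i * c j = c j * c i) :
    ∀ n p, p + 2 + n ≤ k →
    dn c (p + 2) (n + 1) * (up c 1 (p + n + 1) * c (p + n + 2)) =
      up c 1 (p + n + 1) * dn c (p + 1) (n + 2) := by
  intro n p hp
  have hsplit : up c 1 (p + n + 1) = up c 1 p * up c (p + 1) (n + 1) := by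
    rw [show p + n + 1 = p + (n + 1) from by omega, up_add,
      show (1:ℕ) + p = p + 1 from by omega]
  have hcU2 : up c (p + 1) (n + 1) * c (p + n + 2) = up c (p + 1) (n + 2) := by
    rw [show p + n + 2 = p + 1 + (n + 1) from by omega]
    exact (up_succ_right c (p + 1) (n + 1)).symm
  have hcomm1 : up c 1 p * dn c (p + 2) (n + 1) = dn c (p + 2) (n + 1) * up c 1 p := by
    refine commute_up_dn c 1 p (p + 2) (n + 1) (fun i j hi1 hi2 hj1 hj2 => ?_)
    exact hcomm i j (by omega) (by omega) (by omega) (by omega) (by omega)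
  have hM := lemM c k hbraid hcomm n p hp
  have eD2 : dn c (p + 1) (n + 2) = c (p + n + 2) * dn c (p + 1) (n + 1) := by
    rw [dn_succ_left, show p + 1 + (n + 1) = p + n + 2 from by omega]
  calc dn c (p + 2) (n + 1) * (up c 1 (p + n + 1) * c (p + n + 2))
      = dn c (p + 2) (n + 1) * (up c 1 p * (up c (p + 1) (n + 1) * c (p + n + 2))) := by
        rw [hsplit]; simp only [mul_assoc]
    _ = dn c (p + 2) (n + 1) * (up c 1 p * up c (p + 1) (n + 2)) := by rw [hcU2]
    _ = up c 1 p * (dn c (p + 2) (n + 1) * up c (p + 1) (n + 2)) := swap hcomm1.symm _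
    _ = up c 1 p * (up c (p + 1) (n + 2) * dn c (p + 1) (n + 1)) := by rw [hM]
    _ = up c 1 (p + n + 1) * dn c (p + 1) (n + 2) := by
        rw [hsplit, ← hcU2, eD2]; simp only [mul_assoc]

/-- the key power identity: `δ_k^m = δ_{k-1}^m · (c_k ⋯ c_{k-m+1})` -/
lemma star (c : ℕ → G) (k : ℕ)
    (hbraid : ∀ i, 1 ≤ i → i ≤ k - 1 → c i * c (i + 1) * c i = c (i + 1) * c i * c (i + 1))
    (hcomm : ∀ i j, 1 ≤ i → i ≤ k → 1 ≤ j → j ≤ k → i + 2 ≤ j → c i * c j = c j * c i) :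
    ∀ n q, n + 1 + q ≤ k →
    (up c 1 (n + q + 1)) ^ (n + 1) = (up c 1 (n + q)) ^ (n + 1) * dn c (q + 1) (n + 1) := by
  intro n
  induction n with
  | zero =>
    intro q hq
    simp only [Nat.zero_add, pow_one, dn_one]
    rw [up_succ_right, show (1:ℕ) + q = q + 1 from by omega]
  | succ n IH =>
    intro q hq
    have IH' := IH (q + 1) (by omega)
    simp only [show n + (q + 1) + 1 = n + q + 2 from by omega,
      show n + (q + 1) = n + q + 1 from by omega] at IH'
    have hL := lemL c k hbraid hcomm n q (by omega)
    simp only [show q + n + 1 = n + q + 1 from by omega,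
      show q + n + 2 = n + q + 2 from by omega] at hL
    have eδ : up c 1 (n + q + 2) = up c 1 (n + q + 1) * c (n + q + 2) := by
      rw [show n + q + 2 = (n + q + 1) + 1 from rfl, up_succ_right,
        show 1 + (n + q + 1) = n + q + 2 from by omega]
    simp only [show n + 1 + q + 1 = n + q + 2 from by omega,
      show n + 1 + q = n + q + 1 from by omega]
    calc (up c 1 (n + q + 2)) ^ (n + 2)
        = (up c 1 (n + q + 2)) ^ (n + 1) * up c 1 (n + q + 2) := by rw [pow_succ]
      _ = (up c 1 (n + q + 1)) ^ (n + 1) * (dn c (q + 2) (n + 1) *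
            (up c 1 (n + q + 1) * c (n + q + 2))) := by
          rw [IH', eδ]; simp only [mul_assoc]
      _ = (up c 1 (n + q + 1)) ^ (n + 1) * (up c 1 (n + q + 1) * dn c (q + 1) (n + 2)) := by
          rw [hL]
      _ = (up c 1 (n + q + 1)) ^ (n + 2) * dn c (q + 1) (n + 2) := by
          rw [show (up c 1 (n + q + 1)) ^ (n + 2) =
            (up c 1 (n + q + 1)) ^ (n + 1) * up c 1 (n + q + 1) from pow_succ _ _]
          simp only [mul_assoc]

lemma conj_mem {S : Set G} (hS : ∀ (g x : G), x ∈ S → g * x * g⁻¹ ∈ S) (g : G) :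
    ∀ x ∈ Subgroup.closure S, g * x * g⁻¹ ∈ Subgroup.closure S := by
  intro x hx
  induction hx using Subgroup.closure_induction with
  | mem y hy => exact Subgroup.subset_closure (hS g y hy)
  | one => simpa using Subgroup.one_mem (Subgroup.closure S)
  | mul y z hy hz hy' hz' =>
      have h : g * (y * z) * g⁻¹ = (g * y * g⁻¹) * (g * z * g⁻¹) := by group
      rw [h]; exact Subgroup.mul_mem _ hy' hz'
  | inv y hy hy' =>
      have h : g * y⁻¹ * g⁻¹ = (g * y * g⁻¹)⁻¹ := by group
      rw [h]; exact Subgroup.inv_mem _ hy'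

lemma sandwich (c : ℕ → G) (k : ℕ) :
    ∀ n, n ≤ k → dn c 1 n * up c 1 n ∈
      Subgroup.closure {x : G | ∃ h : G, ∃ i, 1 ≤ i ∧ i ≤ k ∧ x = h * (c i) ^ 2 * h⁻¹} := by
  have hS : ∀ (g x : G), x ∈ {x : G | ∃ h : G, ∃ i, 1 ≤ i ∧ i ≤ k ∧ x = h * (c i) ^ 2 * h⁻¹} →
      g * x * g⁻¹ ∈ {x : G | ∃ h : G, ∃ i, 1 ≤ i ∧ i ≤ k ∧ x = h * (c i) ^ 2 * h⁻¹} := by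
    rintro g x ⟨h, i, hi1, hi2, rfl⟩
    exact ⟨g * h, i, hi1, hi2, by group⟩
  intro n
  induction n with
  | zero => intro _; simp [dn_zero, up_zero, Subgroup.one_mem]
  | succ n IH =>
    intro hn
    have h1 : dn c 1 (n + 1) * up c 1 (n + 1) =
        c (n + 1) * (dn c 1 n * up c 1 n) * c (n + 1) := by
      rw [dn_succ_left, up_succ_right, show (1:ℕ) + n = n + 1 from by omega]
      simp only [mul_assoc]
    have h2 : c (n + 1) * (dn c 1 n * up c 1 n) * c (n + 1) =
        (c (n + 1) * (dn c 1 n * up c 1 n) * (c (n + 1))⁻¹) * (c (n + 1)) ^ 2 := by group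
    rw [h1, h2]
    exact Subgroup.mul_mem _ (conj_mem hS _ _ (IH (by omega)))
      (Subgroup.subset_closure ⟨1, n + 1, by omega, by omega, by group⟩)

lemma main_aux : ∀ (k : ℕ), 1 ≤ k → ∀ (c : ℕ → G),
    (∀ i, 1 ≤ i → i ≤ k - 1 → c i * c (i + 1) * c i = c (i + 1) * c i * c (i + 1)) →
    (∀ i j, 1 ≤ i → i ≤ k → 1 ≤ j → j ≤ k → i + 2 ≤ j → c i * c j = c j * c i) →
    (up c 1 k) ^ (k + 1) ∈
      Subgroup.closure {x : G | ∃ h : G, ∃ i, 1 ≤ i ∧ i ≤ k ∧ x = h * (c i) ^ 2 * h⁻¹} := by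
  intro k
  induction k with
  | zero => intro h; omega
  | succ k IH =>
    intro _ c hbraid hcomm
    by_cases hk0 : k = 0
    · subst hk0
      rw [up_one, show (0:ℕ) + 1 + 1 = 2 from rfl]
      exact Subgroup.subset_closure ⟨1, 1, le_refl 1, le_refl 1, by group⟩
    · have hk1 : 1 ≤ k := by omega
      have hbraid' : ∀ i, 1 ≤ i → i ≤ k - 1 →
          c i * c (i + 1) * c i = c (i + 1) * c i * c (i + 1) := by
        intro i h1 h2; exact hbraid i h1 (by omega)
      have hcomm' : ∀ i j, 1 ≤ i → i ≤ k → 1 ≤ j → j ≤ k → i + 2 ≤ j →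
          c i * c j = c j * c i := by
        intro i j h1 h2 h3 h4 h5; exact hcomm i j h1 (by omega) h3 (by omega) h5
      have IH' := IH hk1 c hbraid' hcomm'
      have mono : Subgroup.closure {x : G | ∃ h : G, ∃ i, 1 ≤ i ∧ i ≤ k ∧ x = h * (c i) ^ 2 * h⁻¹}
          ≤ Subgroup.closure
            {x : G | ∃ h : G, ∃ i, 1 ≤ i ∧ i ≤ k + 1 ∧ x = h * (c i) ^ 2 * h⁻¹} := by
        refine Subgroup.closure_mono ?_
        rintro x ⟨h, i, hi1, hi2, hx⟩
        exact ⟨h, i, hi1, by omega, hx⟩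
      have hstar := star c (k + 1) hbraid hcomm k 0 (by omega)
      simp only [Nat.add_zero, Nat.zero_add] at hstar
      -- hstar : (up c 1 (k+1))^(k+1) = (up c 1 k)^(k+1) * dn c 1 (k+1)
      have key : (up c 1 (k + 1)) ^ (k + 1 + 1) =
          (up c 1 k) ^ (k + 1) * (dn c 1 (k + 1) * up c 1 (k + 1)) := by
        rw [pow_succ, hstar]; simp only [mul_assoc]
      rw [key]
      exact Subgroup.mul_mem _ (mono IH') (sandwich c (k + 1) (k + 1) le_rfl)

end ChainPowAux

/-- If `c₁, …, c_k` satisfy the braid and commutation relations, then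
`(c₁c₂⋯c_k)^{k+1}` lies in the subgroup generated by all conjugates of the
squares `cᵢ²`. -/
theorem chain_power_mem_sq_twists {G : Type*} [Group G] (k : ℕ) (hk : 1 ≤ k) (c : ℕ → G)
    (hbraid : ∀ i, 1 ≤ i → i ≤ k - 1 → c i * c (i + 1) * c i = c (i + 1) * c i * c (i + 1))
    (hcomm : ∀ i j, 1 ≤ i → i ≤ k → 1 ≤ j → j ≤ k → i + 2 ≤ j → c i * c j = c j * c i) :
    (((List.range' 1 k).map c).prod) ^ (k + 1) ∈
      Subgroup.closure {x : G | ∃ h : G, ∃ i, 1 ≤ i ∧ i ≤ k ∧ x = h * (c i) ^ 2 * h⁻¹} := by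
  exact ChainPowAux.main_aux k hk c hbraid hcomm
end

section
/- Let G be a group and c₁, ..., c_k ∈ G satisfy the braid relations c_i c_{i+1} c_i = c_{i+1} c_i c_{i+1} and commutation c_i c_j = c_j c_i for |i-j| ≥ 2. Then (c₁c₂⋯c_k)^{k+1} = (c₁c₂⋯c_{k-1})^k · c_k² · (c_k⁻¹ c_{k-1}² c_k) · (c_k⁻¹c_{k-1}⁻¹ c_{k-2}² c_{k-1}c_k) ⋯ (c_k⁻¹c_{k-1}⁻¹⋯c₂⁻¹ c₁² c₂⋯c_{k-1}c_k). -/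
section Aux

variable {G : Type*} [Group G] (c : ℕ → G)

/-- ascending product `c s * c (s+1) * ⋯ * c (s+n-1)` -/
private def asc (s n : ℕ) : G := ((List.range' s n).map c).prod

/-- descending product `c (s+n-1) * ⋯ * c (s+1) * c s` -/
private def desc (s n : ℕ) : G := (((List.range' s n).reverse).map c).prod

private lemma asc_zero (s : ℕ) : asc c s 0 = 1 := rfl

private lemma desc_zero (s : ℕ) : desc c s 0 = 1 := rfl

private lemma asc_split {s m n N : ℕ} (h : m + n = N) :
    asc c s N = asc c s m * asc c (s + m) n := by
  subst h
  rw [asc, asc, asc, ← List.prod_append, ← List.map_append, List.range'_append_1]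

private lemma asc_succ (s n : ℕ) : asc c s (n + 1) = asc c s n * c (s + n) := by
  rw [asc_split c (m := n) (n := 1) rfl]
  simp [asc]

private lemma asc_cons (s n : ℕ) : asc c s (n + 1) = c s * asc c (s + 1) n := by
  rw [asc_split c (m := 1) (n := n) (Nat.add_comm 1 n)]
  simp [asc]

private lemma desc_succ (s n : ℕ) : desc c s (n + 1) = c (s + n) * desc c s n := by
  rw [desc, desc]
  have : List.range' s (n + 1) = List.range' s n ++ [s + n] := by
    simpa using List.range'_concat (step := 1) (s := s) (n := n)
  rw [this]
  simp

private lemma desc_succ' (s n : ℕ) : desc c s (n + 1) = desc c (s + 1) n * c s := by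
  rw [desc, desc]
  have : List.range' s (n + 1) = s :: List.range' (s + 1) n := List.range'_succ (s := s) (n := n) (step := 1)
  rw [this]
  simp

private lemma commute_prod {l₁ l₂ : List ℕ}
    (h : ∀ i ∈ l₁, ∀ j ∈ l₂, Commute (c i) (c j)) :
    Commute ((l₁.map c).prod) ((l₂.map c).prod) := by
  apply Commute.list_prod_right
  intro y hy
  obtain ⟨j, hj, rfl⟩ := List.mem_map.1 hy
  apply Commute.list_prod_left
  intro z hz
  obtain ⟨i, hi, rfl⟩ := List.mem_map.1 hz
  exact h i hi j hj

end Aux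

section Main

variable {G : Type*} [Group G] (k : ℕ) (hk : 2 ≤ k) (c : ℕ → G)
  (hbraid : ∀ i, 1 ≤ i → i ≤ k - 1 → c i * c (i + 1) * c i = c (i + 1) * c i * c (i + 1))
  (hcomm : ∀ i j, 1 ≤ i → i ≤ k → 1 ≤ j → j ≤ k → i + 2 ≤ j → c i * c j = c j * c i)

include hk hbraid hcomm in
private lemma shift {s n i : ℕ} (hs : 1 ≤ s) (hsi : s ≤ i) (hin : i + 2 ≤ s + n)
    (hnk : s + n ≤ k + 1) :
    asc c s n * c i = c (i + 1) * asc c s n := by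
  obtain ⟨a, rfl⟩ : ∃ a, i = s + a := ⟨i - s, by omega⟩
  obtain ⟨b, rfl⟩ : ∃ b, n = a + b + 2 := ⟨n - a - 2, by omega⟩
  have hsplit : asc c s (a + b + 2) =
      asc c s a * (c (s + a) * (c (s + a + 1) * asc c (s + a + 2) b)) := by
    rw [asc_split c (s := s) (m := a) (n := b + 2) (by omega),
      asc_cons c (s + a) (b + 1), asc_cons c (s + a + 1) b]
  have h1 : Commute (c (s + a)) (asc c (s + a + 2) b) := by
    apply Commute.list_prod_right
    intro y hy
    obtain ⟨j, hj, rfl⟩ := List.mem_map.1 hy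
    rw [List.mem_range'_1] at hj
    exact hcomm (s + a) j (by omega) (by omega) (by omega) (by omega) (by omega)
  have h2 : Commute (c (s + a + 1)) (asc c s a) := by
    apply Commute.list_prod_right
    intro y hy
    obtain ⟨j, hj, rfl⟩ := List.mem_map.1 hy
    rw [List.mem_range'_1] at hj
    exact (hcomm j (s + a + 1) (by omega) (by omega) (by omega) (by omega) (by omega)).symm
  have hb : c (s + a) * (c (s + a + 1) * (c (s + a) * asc c (s + a + 2) b)) =
      c (s + a + 1) * (c (s + a) * (c (s + a + 1) * asc c (s + a + 2) b)) := by
    rw [← mul_assoc, ← mul_assoc, ← mul_assoc, ← mul_assoc,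
      hbraid (s + a) (by omega) (by omega)]
  calc asc c s (a + b + 2) * c (s + a)
      = asc c s a * (c (s + a) * (c (s + a + 1) * (asc c (s + a + 2) b * c (s + a)))) := by
        rw [hsplit]; simp [mul_assoc]
    _ = asc c s a * (c (s + a) * (c (s + a + 1) * (c (s + a) * asc c (s + a + 2) b))) := by
        rw [← h1.eq]
    _ = asc c s a * (c (s + a + 1) * (c (s + a) * (c (s + a + 1) * asc c (s + a + 2) b))) := by
        rw [hb]
    _ = c (s + a + 1) * (asc c s a * (c (s + a) * (c (s + a + 1) * asc c (s + a + 2) b))) := by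
        rw [← mul_assoc, ← h2.eq, mul_assoc]
    _ = c (s + a + 1) * asc c s (a + b + 2) := by rw [hsplit]

include hk hbraid hcomm in
private lemma descasc : ∀ n a M, 1 ≤ a → a + M ≤ k → n ≤ M →
    desc c (a + 1) n * asc c a (M + 1) = asc c a (M + 1) * desc c a n := by
  intro n
  induction n with
  | zero => intro a M _ _ _; simp [desc_zero]
  | succ n ih =>
    intro a M ha hM hnM
    rw [desc_succ, mul_assoc, ih a M ha hM (by omega), ← mul_assoc]
    have hs : asc c a (M + 1) * c (a + n) = c (a + n + 1) * asc c a (M + 1) :=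
      shift k hk c hbraid hcomm ha (by omega) (by omega) (by omega)
    have e : a + 1 + n = a + n + 1 := by omega
    rw [e, ← hs, mul_assoc, ← desc_succ]

include hk hbraid hcomm in
private lemma power {p : ℕ} (hp : p + 1 = k) :
    ∀ j m, j + m = k → (asc c 1 k) ^ j = (asc c 1 p) ^ j * desc c (m + 1) j := by
  intro j
  induction j with
  | zero => intro m _; simp [desc_zero]
  | succ j ih =>
    intro m hjm
    rw [pow_succ, ih (m + 1) (by omega), pow_succ]
    have hsplitk : asc c 1 k = asc c 1 m * asc c (m + 1) (j + 1) := by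
      rw [asc_split c (s := 1) (m := m) (n := j + 1) (by omega), Nat.add_comm 1 m]
    have hc : Commute (desc c (m + 2) j) (asc c 1 m) := by
      refine commute_prod c ?_
      intro i hi j' hj'
      rw [List.mem_reverse, List.mem_range'_1] at hi
      rw [List.mem_range'_1] at hj'
      exact (hcomm j' i (by omega) (by omega) (by omega) (by omega) (by omega)).symm
    have hda : desc c (m + 2) j * asc c (m + 1) (j + 1) =
        asc c (m + 1) (j + 1) * desc c (m + 1) j :=
      descasc k hk c hbraid hcomm j (m + 1) j (by omega) (by omega) le_rfl
    have hsplitp : asc c 1 p = asc c 1 m * asc c (m + 1) j := by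
      rw [asc_split c (s := 1) (m := m) (n := j) (by omega), Nat.add_comm 1 m]
    calc asc c 1 p ^ j * desc c (m + 2) j * asc c 1 k
        = asc c 1 p ^ j * (desc c (m + 2) j * asc c 1 m * asc c (m + 1) (j + 1)) := by
          rw [hsplitk]; simp [mul_assoc]
      _ = asc c 1 p ^ j * (asc c 1 m * (desc c (m + 2) j * asc c (m + 1) (j + 1))) := by
          rw [hc.eq, mul_assoc]
      _ = asc c 1 p ^ j * (asc c 1 m * (asc c (m + 1) (j + 1) * desc c (m + 1) j)) := by
          rw [hda]
      _ = asc c 1 p ^ j * (asc c 1 m * (asc c (m + 1) j * (c (m + 1 + j) * desc c (m + 1) j))) := by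
          rw [asc_succ, mul_assoc]
      _ = asc c 1 p ^ j * asc c 1 p * desc c (m + 1) (j + 1) := by
          rw [hsplitp, desc_succ]
          simp [mul_assoc]

private lemma telescope : ∀ n m, n + m = k →
    ((List.range n).map (fun t =>
        let m' := k - t
        (((List.range' (m' + 1) (k - m')).map c).prod)⁻¹ * (c m') ^ 2 *
          (((List.range' (m' + 1) (k - m')).map c).prod))).prod
      = desc c (m + 1) n * asc c (m + 1) n := by
  intro n
  induction n with
  | zero => intro m _; simp [desc_zero, asc_zero]
  | succ n ih =>
    intro m hnm
    rw [List.range_succ, List.map_append, List.prod_append, ih (m + 1) (by omega)]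
    have e1 : k - n = m + 1 := by omega
    have e2 : k - (m + 1) = n := by omega
    simp only [List.map_singleton, List.prod_singleton, e1, e2]
    show desc c (m + 2) n * asc c (m + 2) n *
        ((asc c (m + 2) n)⁻¹ * (c (m + 1)) ^ 2 * asc c (m + 2) n)
      = desc c (m + 1) (n + 1) * asc c (m + 1) (n + 1)
    rw [desc_succ', asc_cons, sq]
    group

end Main

/-- If `c₁, …, c_k` satisfy the braid and commutation relations, then
`(c₁⋯c_k)^{k+1} = (c₁⋯c_{k-1})^k · c_k² · (c_k⁻¹ c_{k-1}² c_k) ⋯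
(c_k⁻¹⋯c₂⁻¹ c₁² c₂⋯c_k)`. -/
theorem chain_power_eq_prod_of_conj_squares {G : Type*} [Group G] (k : ℕ) (hk : 2 ≤ k)
    (c : ℕ → G)
    (hbraid : ∀ i, 1 ≤ i → i ≤ k - 1 → c i * c (i + 1) * c i = c (i + 1) * c i * c (i + 1))
    (hcomm : ∀ i j, 1 ≤ i → i ≤ k → 1 ≤ j → j ≤ k → i + 2 ≤ j → c i * c j = c j * c i) :
    (((List.range' 1 k).map c).prod) ^ (k + 1) =
      (((List.range' 1 (k - 1)).map c).prod) ^ k *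
        (((List.range k).map (fun t =>
          let m := k - t
          (((List.range' (m + 1) (k - m)).map c).prod)⁻¹ * (c m) ^ 2 *
            (((List.range' (m + 1) (k - m)).map c).prod))).prod) := by
  obtain ⟨p, hp⟩ : ∃ p, p + 1 = k := ⟨k - 1, by omega⟩
  have hk1 : k - 1 = p := by omega
  show (asc c 1 k) ^ (k + 1) = (asc c 1 (k - 1)) ^ k * _
  rw [hk1, telescope k c k 0 (by omega), pow_succ,
    power k hk c hbraid hcomm hp k 0 (by omega)]
  rw [mul_assoc]
end

section
/- Let φ: G → Q be a surjective group homomorphism with kernel K, and let T ⊆ G be a set of coset representatives (a transversal) containing the identity, with the map q ↦ t_q ∈ T a section of φ. Then K is generated by the elements t x (t̄x)⁻¹, where t ranges over T, x ranges over a generating set X of G together with inverses of elements of X, and t̄x denotes the representative in T of the coset of tx. -/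
/-- Reidemeister–Schreier generating set: if `φ : G → Q` is a surjective homomorphism
with kernel `K`, `X` generates `G`, and `σ : Q → G` is a section of `φ` (a choice of
transversal) with `σ 1 = 1`, then `K` is generated by the elements
`t x (overline{t x})⁻¹` for `t` in the transversal and `x ∈ X ∪ X⁻¹`, where
`overline{h} = σ (φ h)`. -/
theorem reidemeister_schreier_generators {G Q : Type*} [Group G] [Group Q]
    (φ : G →* Q) (hφ : Function.Surjective φ)
    (X : Set G) (hX : Subgroup.closure X = ⊤)
    (σ : Q → G) (hσ : ∀ q, φ (σ q) = q) (hσ1 : σ 1 = 1) :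
    φ.ker = Subgroup.closure
      {k : G | ∃ q : Q, ∃ x : G, (x ∈ X ∨ x⁻¹ ∈ X) ∧
        k = σ q * x * (σ (φ (σ q * x)))⁻¹} := by
  set S : Set G := {k : G | ∃ q : Q, ∃ x : G, (x ∈ X ∨ x⁻¹ ∈ X) ∧
        k = σ q * x * (σ (φ (σ q * x)))⁻¹} with hS
  set H := Subgroup.closure S with hH
  -- key lemma
  have key : ∀ g : G, ∀ q : Q, σ q * g * (σ (φ (σ q * g)))⁻¹ ∈ H := by
    intro g
    have hg : g ∈ Subgroup.closure X := by rw [hX]; trivial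
    induction hg using Subgroup.closure_induction with
    | mem x hx =>
      intro q
      -- x ∈ X, direct generator
      exact Subgroup.subset_closure ⟨q, x, Or.inl hx, rfl⟩
    | one =>
      intro q
      have : σ q * 1 * (σ (φ (σ q * 1)))⁻¹ = 1 := by
        simp [hσ q]
      rw [this]; exact one_mem H
    | mul a b ha hb iha ihb =>
      intro q
      have h1 := iha q
      have h2 := ihb (φ (σ q * a))
      have e : σ q * (a * b) * (σ (φ (σ q * (a * b))))⁻¹ =
          (σ q * a * (σ (φ (σ q * a)))⁻¹) *
          (σ (φ (σ q * a)) * b * (σ (φ (σ (φ (σ q * a)) * b)))⁻¹) := by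
        have : φ (σ (φ (σ q * a)) * b) = φ (σ q * (a * b)) := by
          simp [map_mul, hσ, mul_assoc]
        rw [this]; group
      rw [e]; exact mul_mem h1 h2
    | inv a ha iha =>
      intro q
      have h1 := iha (φ (σ q * a⁻¹))
      have hq : φ (σ (φ (σ q * a⁻¹)) * a) = q := by
        simp [map_mul, hσ, mul_assoc]
      rw [hq] at h1
      have e : σ q * a⁻¹ * (σ (φ (σ q * a⁻¹)))⁻¹ =
          (σ (φ (σ q * a⁻¹)) * a * (σ q)⁻¹)⁻¹ := by group
      rw [e]; exact inv_mem h1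
  apply le_antisymm
  · intro k hk
    have hk1 : φ k = 1 := hk
    have := key k 1
    rw [hσ1, one_mul, hk1, hσ1] at this
    simpa using this
  · rw [Subgroup.closure_le]
    rintro k ⟨q, x, -, rfl⟩
    simp [MonoidHom.mem_ker, map_mul, hσ]
end

section
/- Let G be the group with presentation on generators Y_{i,j} for 1 ≤ i,j ≤ g with i ≠ j (g ≥ 3), with relators: (1) Y_{i,j}²; (2) (Y_{i,j}Y_{k,j})², (Y_{i,j}Y_{k,l})²; (3) (Y_{i,j}Y_{i,k}Y_{j,k})², (Y_{i,j}Y_{i,k}Y_{i,l})²; (4) (Y_{j,i}Y_{i,j}Y_{k,j}Y_{j,k}Y_{i,k}Y_{k,i})²; (5) the relators expressing Y_{g,i} in terms of the others for 1 ≤ i ≤ g-1. Let N be the normal subgroup normally generated by all Y_{j,i}⁻¹Y_{i,j}. Then in the quotient G/N, for all 1 ≤ i < j ≤ g, the images of Y_{i,j} and Y_{j,i} are equal, all generators have order dividing 2, and any two generators commute; hence G/N is an elementary abelian 2-group. -/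
private lemma comm_of_sq' {Q : Type*} [Group Q] {a b : Q} (ha : a ^ 2 = 1) (hb : b ^ 2 = 1)
    (hab : (a * b) ^ 2 = 1) : Commute a b := by
  have ha' : a⁻¹ = a := inv_eq_of_mul_eq_one_right (by rw [← sq]; exact ha)
  have hb' : b⁻¹ = b := inv_eq_of_mul_eq_one_right (by rw [← sq]; exact hb)
  have hab' : (a * b)⁻¹ = a * b := inv_eq_of_mul_eq_one_right (by rw [← sq]; exact hab)
  have h : b * a = a * b := by
    have : b * a = (a * b)⁻¹ := by rw [mul_inv_rev, ha', hb']
    rw [this, hab']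
  exact (commute_iff_eq a b).mpr h.symm

private lemma prod_map_mul_split' {M : Type*} [Monoid M] (f h : ℕ → M) :
    ∀ l : List ℕ, l.Nodup → (∀ a ∈ l, ∀ b ∈ l, a ≠ b → Commute (h a) (f b)) →
    (l.map (fun k => f k * h k)).prod = (l.map f).prod * (l.map h).prod := by
  intro l
  induction l with
  | nil => simp
  | cons c t ih =>
    intro hnd hcomm
    have hct : c ∉ t := (List.nodup_cons.mp hnd).1
    have hc : Commute (h c) ((t.map f).prod) := by
      apply Commute.list_prod_right
      intro z hz
      obtain ⟨b, hb, rfl⟩ := List.mem_map.mp hz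
      exact hcomm c (List.mem_cons_self) b (List.mem_cons_of_mem _ hb)
        (fun e => hct (e ▸ hb))
    rw [List.map_cons, List.map_cons, List.map_cons, List.prod_cons, List.prod_cons,
      List.prod_cons, ih (List.nodup_cons.mp hnd).2
        (fun a ha b hb hab =>
          hcomm a (List.mem_cons_of_mem _ ha) b (List.mem_cons_of_mem _ hb) hab)]
    calc f c * h c * ((t.map f).prod * (t.map h).prod)
        = f c * ((h c * (t.map f).prod) * (t.map h).prod) := by
          rw [mul_assoc, mul_assoc]
      _ = f c * (((t.map f).prod * h c) * (t.map h).prod) := by rw [hc.eq]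
      _ = f c * (t.map f).prod * (h c * (t.map h).prod) := by
          rw [mul_assoc (t.map f).prod (h c) (t.map h).prod,
            ← mul_assoc (f c) (t.map f).prod (h c * (t.map h).prod)]

private lemma prod_map_eq_mul_filter' {M : Type*} [Monoid M] (x : ℕ → M) :
    ∀ l : List ℕ, l.Nodup → (∀ a ∈ l, ∀ b ∈ l, Commute (x a) (x b)) → ∀ i ∈ l,
    (l.map x).prod = x i * (((l.filter (fun k => k ≠ i)).map x)).prod := by
  intro l
  induction l with
  | nil => intro _ _ i hi; cases hi
  | cons c t ih =>
    intro hnd hcomm i hi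
    have hct : c ∉ t := (List.nodup_cons.mp hnd).1
    by_cases hci : c = i
    · subst hci
      have hfilter : (c :: t).filter (fun k => k ≠ c) = t := by
        rw [List.filter_cons_of_neg (by simp)]
        exact List.filter_eq_self.mpr (fun a ha => by
          simp only [decide_eq_true_eq]
          exact fun e => hct (e ▸ ha))
      rw [hfilter, List.map_cons, List.prod_cons]
    · have hit : i ∈ t := by
        rcases List.mem_cons.mp hi with h | h
        · exact absurd h.symm hci
        · exact h
      have hcx : Commute (x c) (x i) :=
        hcomm c (List.mem_cons_self) i hi
      have hfc : (c :: t).filter (fun k => k ≠ i) = c :: t.filter (fun k => k ≠ i) := by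
        rw [List.filter_cons_of_pos (by simp [hci])]
      rw [List.map_cons, List.prod_cons,
        ih (List.nodup_cons.mp hnd).2
          (fun a ha b hb => hcomm a (List.mem_cons_of_mem _ ha) b (List.mem_cons_of_mem _ hb))
          i hit,
        hfc, List.map_cons, List.prod_cons, ← mul_assoc, hcx.eq, mul_assoc]



/-- Let `G` be a group generated by elements `Y i j` (`1 ≤ i, j ≤ g`, `i ≠ j`)
subject to the relators (1)–(5) of the presentation of `Γ₂(g-1)` (with the extra
generators `Y_{g,i}`), and let `N` be the normal closure of all `Y_{j,i}⁻¹ Y_{i,j}`.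
Then in `G/N` the images of `Y_{i,j}` and `Y_{j,i}` coincide, all generators have
order dividing `2` and any two generators commute; moreover `G/N` is an elementary
abelian `2`-group (every element squares to `1` and any two elements commute). -/
theorem quotient_by_N_elementary_abelian {G : Type*} [Group G] (g : ℕ) (hg : 3 ≤ g)
    (Y : ℕ → ℕ → G)
    (hgen : Subgroup.closure {x : G | ∃ i j, 1 ≤ i ∧ i ≤ g ∧ 1 ≤ j ∧ j ≤ g ∧ i ≠ j ∧
      x = Y i j} = ⊤)
    (h1 : ∀ i j, 1 ≤ i → i ≤ g - 1 → 1 ≤ j → j ≤ g → i ≠ j → (Y i j) ^ 2 = 1)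
    (h2a : ∀ i j k, 1 ≤ i → i ≤ g - 1 → 1 ≤ j → j ≤ g → 1 ≤ k → k ≤ g - 1 →
      i ≠ j → i ≠ k → j ≠ k → (Y i j * Y k j) ^ 2 = 1)
    (h2b : ∀ i j k l, 1 ≤ i → i ≤ g - 1 → 1 ≤ j → j ≤ g → 1 ≤ k → k ≤ g - 1 → 1 ≤ l → l ≤ g →
      i ≠ j → i ≠ k → i ≠ l → j ≠ k → j ≠ l → k ≠ l → (Y i j * Y k l) ^ 2 = 1)
    (h3a : ∀ i j k, 1 ≤ i → i ≤ g - 1 → 1 ≤ j → j ≤ g - 1 → 1 ≤ k → k ≤ g →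
      i ≠ j → i ≠ k → j ≠ k → (Y i j * Y i k * Y j k) ^ 2 = 1)
    (h3b : ∀ i j k l, 1 ≤ i → i ≤ g - 1 → 1 ≤ j → j ≤ g → 1 ≤ k → k ≤ g → 1 ≤ l → l ≤ g →
      i ≠ j → i ≠ k → i ≠ l → j ≠ k → j ≠ l → k ≠ l → (Y i j * Y i k * Y i l) ^ 2 = 1)
    (h4 : ∀ i j k, 1 ≤ i → i ≤ g - 1 → 1 ≤ j → j ≤ g - 1 → 1 ≤ k → k ≤ g - 1 →
      i ≠ j → i ≠ k → j ≠ k →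
      (Y j i * Y i j * Y k j * Y j k * Y i k * Y k i) ^ 2 = 1)
    (h5 : ∀ i, 1 ≤ i → i ≤ g - 1 →
      ((((List.range' 1 (g - 1)).filter (fun k => k ≠ i)).map
        (fun k => Y k i * Y k g)).prod) * Y i g = Y g i)
    (N : Subgroup G)
    (hN : N = Subgroup.normalClosure
      {x : G | ∃ i j, 1 ≤ i ∧ i ≤ g ∧ 1 ≤ j ∧ j ≤ g ∧ i ≠ j ∧ x = (Y j i)⁻¹ * Y i j})
    [N.Normal] :
    (∀ i j, 1 ≤ i → i < j → j ≤ g →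
      (QuotientGroup.mk' N) (Y i j) = (QuotientGroup.mk' N) (Y j i)) ∧
    (∀ i j, 1 ≤ i → i ≤ g → 1 ≤ j → j ≤ g → i ≠ j →
      ((QuotientGroup.mk' N) (Y i j)) ^ 2 = 1) ∧
    (∀ i j k l, 1 ≤ i → i ≤ g → 1 ≤ j → j ≤ g → 1 ≤ k → k ≤ g → 1 ≤ l → l ≤ g →
      i ≠ j → k ≠ l →
      (QuotientGroup.mk' N) (Y i j) * (QuotientGroup.mk' N) (Y k l) =
        (QuotientGroup.mk' N) (Y k l) * (QuotientGroup.mk' N) (Y i j)) ∧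
    ((∀ x : G ⧸ N, x ^ 2 = 1) ∧ ∀ x y : G ⧸ N, x * y = y * x) := by
  set φ := QuotientGroup.mk' N with hφ
  -- symmetry
  have hsym : ∀ i j, 1 ≤ i → i ≤ g → 1 ≤ j → j ≤ g → i ≠ j → φ (Y i j) = φ (Y j i) := by
    intro i j hi1 hi2 hj1 hj2 hij
    have hmem : (Y j i)⁻¹ * Y i j ∈ N := by
      rw [hN]
      exact Subgroup.subset_normalClosure ⟨i, j, hi1, hi2, hj1, hj2, hij, rfl⟩
    have h0 : φ ((Y j i)⁻¹ * Y i j) = 1 := (QuotientGroup.eq_one_iff _).mpr hmem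
    rw [map_mul, map_inv, inv_mul_eq_one] at h0
    exact h0.symm
  -- squares
  have hsqQ : ∀ i j, 1 ≤ i → i ≤ g → 1 ≤ j → j ≤ g → i ≠ j → (φ (Y i j)) ^ 2 = 1 := by
    intro i j hi1 hi2 hj1 hj2 hij
    by_cases hig : i ≤ g - 1
    · rw [← map_pow, h1 i j hi1 hig hj1 hj2 hij, map_one]
    · have hig' : i = g := by omega
      rw [hig', hsym g j (by omega) le_rfl hj1 hj2 (by omega), ← map_pow,
        h1 j g hj1 (by omega) (by omega) le_rfl (by omega), map_one]
  -- commutation from relator (2) with common second index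
  have hc1 : ∀ i j k, 1 ≤ i → i ≤ g - 1 → 1 ≤ j → j ≤ g → 1 ≤ k → k ≤ g - 1 →
      i ≠ j → i ≠ k → j ≠ k → Commute (φ (Y i j)) (φ (Y k j)) := by
    intro i j k hi1 hi2 hj1 hj2 hk1 hk2 hij hik hjk
    refine comm_of_sq' (hsqQ i j hi1 (by omega) hj1 hj2 hij)
      (hsqQ k j hk1 (by omega) hj1 hj2 (Ne.symm hjk)) ?_
    rw [← map_mul, ← map_pow, h2a i j k hi1 hi2 hj1 hj2 hk1 hk2 hij hik hjk, map_one]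
  -- commutation from relator (2) with disjoint indices
  have hc2 : ∀ i j k l, 1 ≤ i → i ≤ g - 1 → 1 ≤ j → j ≤ g → 1 ≤ k → k ≤ g - 1 → 1 ≤ l → l ≤ g →
      i ≠ j → i ≠ k → i ≠ l → j ≠ k → j ≠ l → k ≠ l →
      Commute (φ (Y i j)) (φ (Y k l)) := by
    intro i j k l hi1 hi2 hj1 hj2 hk1 hk2 hl1 hl2 hij hik hil hjk hjl hkl
    refine comm_of_sq' (hsqQ i j hi1 (by omega) hj1 hj2 hij)
      (hsqQ k l hk1 (by omega) hl1 hl2 hkl) ?_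
    rw [← map_mul, ← map_pow,
      h2b i j k l hi1 hi2 hj1 hj2 hk1 hk2 hl1 hl2 hij hik hil hjk hjl hkl, map_one]
  -- membership facts for the filtered range
  have hmemL : ∀ i, ∀ a ∈ (List.range' 1 (g - 1)).filter (fun k => k ≠ i),
      1 ≤ a ∧ a ≤ g - 1 ∧ a ≠ i := by
    intro i a ha
    have h := List.mem_filter.mp ha
    have h1a := List.mem_range'_1.mp h.1
    refine ⟨h1a.1, by omega, ?_⟩
    simpa using h.2
  have hnodupL : ∀ i : ℕ, ((List.range' 1 (g - 1)).filter (fun k => k ≠ i)).Nodup :=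
    fun i => (List.nodup_range' (s := 1) (n := g - 1)).filter _
  -- the lantern relation in the quotient, split into two products
  have hrel : ∀ i, 1 ≤ i → i ≤ g - 1 →
      ((((List.range' 1 (g - 1)).filter (fun k => k ≠ i)).map (fun k => φ (Y k i))).prod) *
      ((((List.range' 1 (g - 1)).filter (fun k => k ≠ i)).map (fun k => φ (Y k g))).prod)
        = 1 := by
    intro i hi1 hi2
    have h5' := congrArg φ (h5 i hi1 hi2)
    rw [map_mul, map_list_prod, List.map_map] at h5'
    have heq : ((List.range' 1 (g - 1)).filter (fun k => k ≠ i)).map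
          (⇑φ ∘ fun k => Y k i * Y k g)
        = ((List.range' 1 (g - 1)).filter (fun k => k ≠ i)).map
          (fun k => φ (Y k i) * φ (Y k g)) := by
      apply List.map_congr_left
      intro a _
      simp [Function.comp, map_mul]
    rw [heq, prod_map_mul_split' (fun k => φ (Y k i)) (fun k => φ (Y k g)) _ (hnodupL i)
      (by
        intro a ha b hb hab
        obtain ⟨ha1, ha2, hai⟩ := hmemL i a ha
        obtain ⟨hb1, hb2, hbi⟩ := hmemL i b hb
        exact hc2 a g b i ha1 ha2 (by omega) le_rfl hb1 hb2 hi1 (by omega)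
          (by omega) hab (by omega) (by omega) (by omega) hbi)] at h5'
    rw [← hsym i g hi1 (by omega) (by omega) le_rfl (by omega)] at h5'
    exact mul_eq_right.mp h5'
  -- the hard commutation: φ (Y i g) commutes with φ (Y i m)
  have hc3 : ∀ i m, 1 ≤ i → i ≤ g - 1 → 1 ≤ m → m ≤ g - 1 → i ≠ m →
      Commute (φ (Y i g)) (φ (Y i m)) := by
    intro i m hi1 hi2 hm1 hm2 him
    by_cases hg3 : g = 3
    · subst hg3
      have hrel' := hrel m hm1 hm2
      have hLm : (List.range' 1 (3 - 1)).filter (fun k => k ≠ m) = [i] := by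
        have : List.range' 1 (3 - 1) = [1, 2] := by decide
        rw [this]
        interval_cases i <;> interval_cases m <;> revert him <;> decide
      rw [hLm, List.map_cons, List.map_nil, List.prod_cons, List.prod_nil, mul_one,
        List.map_cons, List.map_nil, List.prod_cons, List.prod_nil, mul_one] at hrel'
      have : φ (Y i m) = (φ (Y i 3))⁻¹ := eq_inv_of_mul_eq_one_left hrel'
      rw [this]
      exact (Commute.refl _).inv_right
    · have hg4 : 4 ≤ g := by omega
      obtain ⟨j, hj1, hj2, hji, hjm⟩ : ∃ j, 1 ≤ j ∧ j ≤ g - 1 ∧ j ≠ i ∧ j ≠ m := by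
        by_cases e1 : i = 1 ∨ m = 1
        · by_cases e2 : i = 2 ∨ m = 2
          · exact ⟨3, by omega, by omega, by omega, by omega⟩
          · exact ⟨2, by omega, by omega, by omega, by omega⟩
        · exact ⟨1, by omega, by omega, by omega, by omega⟩
      have hxcomm : ∀ a ∈ List.range' 1 (g - 1), ∀ b ∈ List.range' 1 (g - 1),
          Commute (φ (Y a g)) (φ (Y b g)) := by
        intro a ha b hb
        rcases eq_or_ne a b with rfl | hab
        · exact Commute.refl _
        · have ha' := List.mem_range'_1.mp ha
          have hb' := List.mem_range'_1.mp hb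
          exact hc1 a g b ha'.1 (by omega) (by omega) le_rfl hb'.1 (by omega)
            (by omega) hab (by omega)
      have hPi := prod_map_eq_mul_filter' (fun k => φ (Y k g)) (List.range' 1 (g - 1))
        (List.nodup_range' (s := 1) (n := g - 1)) hxcomm i (List.mem_range'_1.mpr ⟨hi1, by omega⟩)
      have hPj := prod_map_eq_mul_filter' (fun k => φ (Y k g)) (List.range' 1 (g - 1))
        (List.nodup_range' (s := 1) (n := g - 1)) hxcomm j (List.mem_range'_1.mpr ⟨hj1, by omega⟩)
      have hXi : (((List.range' 1 (g - 1)).filter (fun k => k ≠ i)).map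
            (fun k => φ (Y k g))).prod
          = ((((List.range' 1 (g - 1)).filter (fun k => k ≠ i)).map
            (fun k => φ (Y k i))).prod)⁻¹ :=
        (inv_eq_of_mul_eq_one_right (hrel i hi1 hi2)).symm
      have hXj : (((List.range' 1 (g - 1)).filter (fun k => k ≠ j)).map
            (fun k => φ (Y k g))).prod
          = ((((List.range' 1 (g - 1)).filter (fun k => k ≠ j)).map
            (fun k => φ (Y k j))).prod)⁻¹ :=
        (inv_eq_of_mul_eq_one_right (hrel j hj1 hj2)).symm
      set Ai := (((List.range' 1 (g - 1)).filter (fun k => k ≠ i)).map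
        (fun k => φ (Y k i))).prod with hAidef
      set Aj := (((List.range' 1 (g - 1)).filter (fun k => k ≠ j)).map
        (fun k => φ (Y k j))).prod with hAjdef
      have h0 : φ (Y i g) * Ai⁻¹ = φ (Y j g) * Aj⁻¹ := by
        rw [← hXi, ← hXj, ← hPi, ← hPj]
      have hkey : φ (Y i g) = φ (Y j g) * (Aj⁻¹ * Ai) := by
        have := congrArg (· * Ai) h0
        simpa [mul_assoc] using this
      have hCAi : Commute (φ (Y i m)) Ai := by
        apply Commute.list_prod_right
        intro z hz
        obtain ⟨k, hk, rfl⟩ := List.mem_map.mp hz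
        obtain ⟨hk1, hk2, hki⟩ := hmemL i k hk
        rcases eq_or_ne k m with rfl | hkm
        · rw [hsym k i hm1 (by omega) hi1 (by omega) (Ne.symm him)]
        · rw [hsym i m hi1 (by omega) hm1 (by omega) him]
          exact hc1 m i k hm1 hm2 hi1 (by omega) hk1 hk2 (Ne.symm him)
            (Ne.symm hkm) (Ne.symm hki)
      have hCAj : Commute (φ (Y i m)) Aj := by
        apply Commute.list_prod_right
        intro z hz
        obtain ⟨k, hk, rfl⟩ := List.mem_map.mp hz
        obtain ⟨hk1, hk2, hkj⟩ := hmemL j k hk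
        rcases eq_or_ne k i with rfl | hki
        · rw [hsym k m hi1 (by omega) hm1 (by omega) him,
            hsym k j hi1 (by omega) hj1 (by omega) (Ne.symm hji)]
          exact hc1 m k j hm1 hm2 hi1 (by omega) hj1 hj2 (Ne.symm him)
            (Ne.symm hjm) (Ne.symm hji)
        · rcases eq_or_ne k m with rfl | hkm
          · rw [hsym k j hm1 (by omega) hj1 (by omega) (Ne.symm hjm)]
            exact hc1 i k j hi1 hi2 hm1 (by omega) hj1 hj2 him
              (Ne.symm hji) (Ne.symm hjm)
          · exact hc2 i m k j hi1 hi2 hm1 (by omega) hk1 hk2 hj1 (by omega)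
              him (Ne.symm hki) hji.symm (Ne.symm hkm) hjm.symm hkj
      have hCxj : Commute (φ (Y i m)) (φ (Y j g)) :=
        hc2 i m j g hi1 hi2 hm1 (by omega) hj1 hj2 (by omega) le_rfl
          him (Ne.symm hji) (by omega) (Ne.symm hjm) (by omega) (by omega)
      have hfin : Commute (φ (Y i m)) (φ (Y i g)) := by
        rw [hkey]
        exact hCxj.mul_right (hCAj.inv_right.mul_right hCAi)
      exact hfin.symm
  -- general commutation of generators, ordered version
  have hpair : ∀ i j k l, 1 ≤ i → i < j → j ≤ g → 1 ≤ k → k < l → l ≤ g →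
      Commute (φ (Y i j)) (φ (Y k l)) := by
    intro i j k l hi1 hij hj2 hk1 hkl hl2
    have hi2 : i ≤ g - 1 := by omega
    have hk2 : k ≤ g - 1 := by omega
    by_cases hjl : j = l
    · subst hjl
      rcases eq_or_ne i k with rfl | hik
      · exact Commute.refl _
      · exact hc1 i j k hi1 hi2 (by omega) hj2 hk1 hk2 (by omega) hik (by omega)
    · by_cases hik : i = k
      · subst hik
        by_cases hjg : j = g
        · subst hjg
          exact hc3 i l hi1 hi2 (by omega) (by omega) (by omega)
        · by_cases hlg : l = g
          · subst hlg
            exact (hc3 i j hi1 hi2 (by omega) (by omega) (by omega)).symm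
          · rw [hsym i j hi1 (by omega) (by omega) hj2 (by omega),
              hsym i l hi1 (by omega) (by omega) hl2 (by omega)]
            exact hc1 j i l (by omega) (by omega) hi1 (by omega) (by omega) (by omega)
              (by omega) hjl (by omega)
      · by_cases hjk : j = k
        · subst hjk
          by_cases hlg : l = g
          · subst hlg
            rw [hsym i j hi1 (by omega) (by omega) (by omega) (by omega)]
            exact (hc3 j i (by omega) (by omega) hi1 hi2 (by omega)).symm
          · rw [hsym j l (by omega) (by omega) (by omega) hl2 (by omega)]
            exact hc1 i j l hi1 hi2 (by omega) (by omega) (by omega) (by omega)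
              (by omega) (by omega) (by omega)
        · by_cases hil : i = l
          · subst hil
            by_cases hjg : j = g
            · subst hjg
              rw [hsym k i hk1 (by omega) hi1 (by omega) (by omega)]
              exact hc3 i k hi1 (by omega) hk1 hk2 (by omega)
            · rw [hsym i j hi1 (by omega) (by omega) hj2 (by omega)]
              exact hc1 j i k (by omega) (by omega) hi1 (by omega) hk1 hk2
                (by omega) (by omega) (by omega)
          · exact hc2 i j k l hi1 hi2 (by omega) hj2 hk1 hk2 (by omega) hl2
              (by omega) hik hil hjk hjl (by omega)
  -- general commutation of generators
  have hgc : ∀ i j k l, 1 ≤ i → i ≤ g → 1 ≤ j → j ≤ g → 1 ≤ k → k ≤ g → 1 ≤ l → l ≤ g →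
      i ≠ j → k ≠ l → Commute (φ (Y i j)) (φ (Y k l)) := by
    intro i j k l hi1 hi2 hj1 hj2 hk1 hk2 hl1 hl2 hij hkl
    rcases hij.lt_or_gt with h1 | h1
    · rcases hkl.lt_or_gt with h2 | h2
      · exact hpair i j k l hi1 h1 hj2 hk1 h2 hl2
      · rw [hsym k l hk1 hk2 hl1 hl2 hkl]
        exact hpair i j l k hi1 h1 hj2 hl1 h2 hk2
    · rw [hsym i j hi1 hi2 hj1 hj2 hij]
      rcases hkl.lt_or_gt with h2 | h2
      · exact hpair j i k l hj1 h1 hi2 hk1 h2 hl2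
      · rw [hsym k l hk1 hk2 hl1 hl2 hkl]
        exact hpair j i l k hj1 h1 hi2 hl1 h2 hk2
  -- image of the generators generates the quotient
  have hgenQ : Subgroup.closure (⇑φ '' {x : G | ∃ i j, 1 ≤ i ∧ i ≤ g ∧ 1 ≤ j ∧ j ≤ g ∧
      i ≠ j ∧ x = Y i j}) = ⊤ := by
    rw [← MonoidHom.map_closure, hgen]
    exact Subgroup.map_top_of_surjective φ (QuotientGroup.mk'_surjective N)
  -- every generator is central
  have hcentral : ∀ s ∈ (⇑φ '' {x : G | ∃ i j, 1 ≤ i ∧ i ≤ g ∧ 1 ≤ j ∧ j ≤ g ∧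
      i ≠ j ∧ x = Y i j}), ∀ q : G ⧸ N, s * q = q * s := by
    intro s hs q
    have hle : Subgroup.closure (⇑φ '' {x : G | ∃ i j, 1 ≤ i ∧ i ≤ g ∧ 1 ≤ j ∧ j ≤ g ∧
        i ≠ j ∧ x = Y i j}) ≤ Subgroup.centralizer {s} := by
      apply Subgroup.closure_le _ |>.mpr
      intro t ht
      rw [SetLike.mem_coe, Subgroup.mem_centralizer_iff]
      intro u hu
      rcases hu with rfl
      obtain ⟨x, ⟨i, j, hi1, hi2, hj1, hj2, hij, rfl⟩, rfl⟩ := hs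
      obtain ⟨x', ⟨k, l, hk1, hk2, hl1, hl2, hkl, rfl⟩, rfl⟩ := ht
      exact (hgc i j k l hi1 hi2 hj1 hj2 hk1 hk2 hl1 hl2 hij hkl).eq
    have hq : q ∈ Subgroup.centralizer {s} := hle (hgenQ ▸ Subgroup.mem_top q)
    exact (Subgroup.mem_centralizer_iff.mp hq s rfl)
  -- the quotient is commutative
  have hcomm : ∀ x y : G ⧸ N, x * y = y * x := by
    intro x y
    have hle : Subgroup.closure (⇑φ '' {x : G | ∃ i j, 1 ≤ i ∧ i ≤ g ∧ 1 ≤ j ∧ j ≤ g ∧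
        i ≠ j ∧ x = Y i j}) ≤ Subgroup.centralizer {x} := by
      apply Subgroup.closure_le _ |>.mpr
      intro t ht
      rw [SetLike.mem_coe, Subgroup.mem_centralizer_iff]
      intro u hu
      have hux : u = x := hu
      subst hux
      exact (hcentral t ht _).symm
    have hy : y ∈ Subgroup.centralizer {x} := hle (hgenQ ▸ Subgroup.mem_top y)
    exact Subgroup.mem_centralizer_iff.mp hy x rfl
  -- every element squares to one
  have hsq : ∀ x : G ⧸ N, x ^ 2 = 1 := by
    intro x
    let K : Subgroup (G ⧸ N) :=
      { carrier := {q | q ^ 2 = 1}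
        one_mem' := one_pow 2
        mul_mem' := by
          intro a b ha hb
          have : Commute a b := (commute_iff_eq a b).mpr (hcomm a b)
          simp only [Set.mem_setOf_eq] at ha hb ⊢
          rw [this.mul_pow, ha, hb, one_mul]
        inv_mem' := by
          intro a ha
          simp only [Set.mem_setOf_eq] at ha ⊢
          rw [inv_pow, ha, inv_one] }
    have hle : Subgroup.closure (⇑φ '' {x : G | ∃ i j, 1 ≤ i ∧ i ≤ g ∧ 1 ≤ j ∧ j ≤ g ∧
        i ≠ j ∧ x = Y i j}) ≤ K := by
      apply Subgroup.closure_le _ |>.mpr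
      intro t ht
      obtain ⟨x', ⟨i, j, hi1, hi2, hj1, hj2, hij, rfl⟩, rfl⟩ := ht
      exact hsqQ i j hi1 hi2 hj1 hj2 hij
    exact hle (hgenQ ▸ Subgroup.mem_top x)
  refine ⟨fun i j hi1 hij hj2 => hsym i j hi1 (by omega) (by omega) hj2 (by omega),
    hsqQ, fun i j k l hi1 hi2 hj1 hj2 hk1 hk2 hl1 hl2 hij hkl =>
      (hgc i j k l hi1 hi2 hj1 hj2 hk1 hk2 hl1 hl2 hij hkl).eq,
    hsq, hcomm⟩
end
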